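/- arXiv:1703.01543 — 2 statements merged into one kernel-verified Lean document; each statement's English description precedes it below -/
import Mathlib

section
/- Let H be a complex separable infinite-dimensional Hilbert space, let E ⊆ c₀ be a Banach symmetric sequence space, and let C_E^h = { x ∈ C_E : x = x* } be the real Banach space of self-adjoint elements of the Banach symmetric ideal C_E with the norm ‖·‖_{C_E}. Then every continuous real-linear functional f on C_E^h is the difference of two positive continuous linear functionals on C_E^h (a functional g is positive if g(x) ≥ 0 for every x ∈ C_E^h with x ≥ 0). -/
open scoped InnerProductSpace
open Filter Topology

noncomputable section

/-- The non-increasing rearrangement `x*` of a bounded real sequence: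
`x*_n = inf_{|F| ≤ n} sup_{k ∉ F} |x k|`. -/
noncomputable def decRearrange (x : ℕ → ℝ) (n : ℕ) : ℝ :=
  sInf {c : ℝ | ∃ F : Finset ℕ, F.card ≤ n ∧ ∀ k ∉ F, |x k| ≤ c}

/-- A Banach symmetric sequence space: a nonzero linear subspace of `ℓ∞` (real bounded
sequences) equipped with a complete norm such that `x* ≤ y*` pointwise and `y ∈ E` imply
`x ∈ E` with `‖x‖_E ≤ ‖y‖_E`. -/
structure BanachSymmSeqSpace where
  carrier : Set (ℕ → ℝ)
  bdd : ∀ x ∈ carrier, ∃ C : ℝ, ∀ n, |x n| ≤ C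
  zero_mem : (0 : ℕ → ℝ) ∈ carrier
  add_mem : ∀ x ∈ carrier, ∀ y ∈ carrier, x + y ∈ carrier
  smul_mem : ∀ (c : ℝ), ∀ x ∈ carrier, c • x ∈ carrier
  nontrivial : ∃ x ∈ carrier, x ≠ 0
  nrm : (ℕ → ℝ) → ℝ
  nrm_zero : nrm 0 = 0
  nrm_pos : ∀ x ∈ carrier, x ≠ 0 → 0 < nrm x
  nrm_smul : ∀ (c : ℝ), ∀ x ∈ carrier, nrm (c • x) = |c| * nrm x
  nrm_triangle : ∀ x ∈ carrier, ∀ y ∈ carrier, nrm (x + y) ≤ nrm x + nrm y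
  complete : ∀ u : ℕ → ℕ → ℝ, (∀ n, u n ∈ carrier) →
    (∀ ε : ℝ, 0 < ε → ∃ N, ∀ m ≥ N, ∀ k ≥ N, nrm (u m - u k) < ε) →
    ∃ x ∈ carrier, ∀ ε : ℝ, 0 < ε → ∃ N, ∀ m ≥ N, nrm (u m - x) < ε
  symmetric : ∀ x : ℕ → ℝ, ∀ y ∈ carrier, (∃ C : ℝ, ∀ n, |x n| ≤ C) →
    (∀ n, decRearrange x n ≤ decRearrange y n) → x ∈ carrier ∧ nrm x ≤ nrm y

/-- `E ⊆ c₀`: every element of `E` tends to zero. -/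
def BanachSymmSeqSpace.SubsetC0 (S : BanachSymmSeqSpace) : Prop :=
  ∀ x ∈ S.carrier, Filter.Tendsto x Filter.atTop (nhds 0)

/-- The Fatou property of a Banach symmetric sequence space. -/
def BanachSymmSeqSpace.Fatou (S : BanachSymmSeqSpace) : Prop :=
  ∀ a : ℕ → ℕ → ℝ, (∀ k, a k ∈ S.carrier) → (∀ k n, 0 ≤ a k n) →
    (∀ k n, a k n ≤ a (k + 1) n) → (∃ C : ℝ, ∀ k, S.nrm (a k) ≤ C) →
    ∃ b ∈ S.carrier, (∀ n, IsLUB {r : ℝ | ∃ k, r = a k n} (b n)) ∧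
      IsLUB {r : ℝ | ∃ k, r = S.nrm (a k)} (S.nrm b)

/-- `E = ℓ₂` as a set of sequences. -/
def ellTwo : Set (ℕ → ℝ) := {x : ℕ → ℝ | Summable fun n => (x n) ^ 2}

section OperatorIdeal

variable {H : Type*} [NormedAddCommGroup H] [InnerProductSpace ℂ H] [CompleteSpace H]

/-- The `n`-th singular value (approximation number) of an operator:
`s_n(x) = inf { ‖x - F‖ : rank F ≤ n }` (so `s_0(x) = ‖x‖`). For compact operators this is
the `n`-th eigenvalue (in decreasing order) of `(x*x)^{1/2}`. -/
noncomputable def singVal (x : H →L[ℂ] H) (n : ℕ) : ℝ :=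
  sInf {c : ℝ | ∃ F : H →L[ℂ] H, FiniteDimensional ℂ (LinearMap.range (F : H →ₗ[ℂ] H)) ∧
    Module.finrank ℂ (LinearMap.range (F : H →ₗ[ℂ] H)) ≤ n ∧ ‖x - F‖ = c}

/-- The Banach symmetric ideal `C_E` of compact operators whose singular value sequence
belongs to `E`. -/
def CE (S : BanachSymmSeqSpace) : Set (H →L[ℂ] H) :=
  {x | IsCompactOperator (⇑x) ∧ (fun n => singVal x n) ∈ S.carrier}

/-- The norm `‖x‖_{C_E} = ‖{s_n(x)}‖_E` of the Banach symmetric ideal `C_E`. -/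
noncomputable def CEnorm (S : BanachSymmSeqSpace) (x : H →L[ℂ] H) : ℝ :=
  S.nrm (fun n => singVal x n)

/-- A trace class operator: a compact operator with summable singular values. -/
def IsTraceClass (z : H →L[ℂ] H) : Prop :=
  IsCompactOperator (⇑z) ∧ Summable fun n => singVal z n

/-- The Köthe dual `C_E^× = { y ∈ B(H) : x y is trace class for every x ∈ C_E }`. -/
def KDual (S : BanachSymmSeqSpace) : Set (H →L[ℂ] H) :=
  {y : H →L[ℂ] H | ∀ x ∈ CE (H := H) S, IsTraceClass (x * y)}

/-- The trace of an operator computed with respect to a Hilbert basis `b`: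
`tr z = Σ_i ⟪b i, z (b i)⟫` (basis independent for trace class operators). -/
noncomputable def traceB (b : HilbertBasis ℕ ℂ H) (z : H →L[ℂ] H) : ℂ :=
  ∑' i, ⟪b i, z (b i)⟫_ℂ

/-- The weak topology `σ(C_E, C_E^×)` on `C_E`, generated by the functionals
`x ↦ tr (x y)`, `y ∈ C_E^×`. -/
noncomputable def sigmaTop (S : BanachSymmSeqSpace) (b : HilbertBasis ℕ ℂ H) :
    TopologicalSpace {x : H →L[ℂ] H // x ∈ CE (H := H) S} :=
  ⨅ y : {y : H →L[ℂ] H // y ∈ KDual (H := H) S},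
    TopologicalSpace.induced (fun x => traceB b (x.1 * y.1)) inferInstance

/-- The ball topology `b_{C_E}`: the coarsest topology in which every closed norm ball
of `(C_E, ‖·‖_{C_E})` is closed. -/
noncomputable def ballTop (S : BanachSymmSeqSpace) :
    TopologicalSpace {x : H →L[ℂ] H // x ∈ CE (H := H) S} :=
  TopologicalSpace.generateFrom
    {s | ∃ (c : {x : H →L[ℂ] H // x ∈ CE (H := H) S}) (ε : ℝ), 0 < ε ∧
      s = {y : {x : H →L[ℂ] H // x ∈ CE (H := H) S} | CEnorm S (y.1 - c.1) ≤ ε}ᶜ}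

/-- `W` is a surjective (complex-)linear isometry of the Banach symmetric ideal `C_E`. -/
def SurjLinearIsomOn (S : BanachSymmSeqSpace) (W : (H →L[ℂ] H) → (H →L[ℂ] H)) : Prop :=
  (∀ x ∈ CE (H := H) S, W x ∈ CE (H := H) S) ∧
  (∀ y ∈ CE (H := H) S, ∃ x ∈ CE (H := H) S, W x = y) ∧
  (∀ x ∈ CE (H := H) S, ∀ y ∈ CE (H := H) S, W (x + y) = W x + W y) ∧
  (∀ (c : ℂ), ∀ x ∈ CE (H := H) S, W (c • x) = c • W x) ∧
  (∀ x ∈ CE (H := H) S, CEnorm S (W x) = CEnorm S x)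

end OperatorIdeal

end

/-- The real Banach space `C_E^h` of self-adjoint elements of `C_E`. -/
def CEh {H : Type*} [NormedAddCommGroup H] [InnerProductSpace ℂ H] [CompleteSpace H]
    (S : BanachSymmSeqSpace) : Set (H →L[ℂ] H) :=
  {x : H →L[ℂ] H | x ∈ CE (H := H) S ∧ IsSelfAdjoint x}

/-- `f` is a continuous (bounded) real-linear functional on `C_E^h`. -/
def RealFunctionalOn {H : Type*} [NormedAddCommGroup H] [InnerProductSpace ℂ H]
    [CompleteSpace H] (S : BanachSymmSeqSpace) (f : (H →L[ℂ] H) → ℝ) : Prop :=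
  (∀ a ∈ CEh (H := H) S, ∀ b ∈ CEh (H := H) S, f (a + b) = f a + f b) ∧
  (∀ (c : ℝ), ∀ a ∈ CEh (H := H) S, f (((c : ℂ)) • a) = c * f a) ∧
  (∃ M : ℝ, ∀ a ∈ CEh (H := H) S, |f a| ≤ M * CEnorm S a)
namespace JordanAux

open Finset

/-! ### decRearrange lemmas -/

lemma decSet_nonneg {x : ℕ → ℝ} {n : ℕ} {c : ℝ}
    (hc : c ∈ {c : ℝ | ∃ F : Finset ℕ, F.card ≤ n ∧ ∀ k ∉ F, |x k| ≤ c}) : 0 ≤ c := by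
  obtain ⟨F, -, hF⟩ := hc
  obtain ⟨k, hk⟩ := F.exists_notMem
  exact le_trans (abs_nonneg _) (hF k hk)

lemma decSet_bddBelow (x : ℕ → ℝ) (n : ℕ) :
    BddBelow {c : ℝ | ∃ F : Finset ℕ, F.card ≤ n ∧ ∀ k ∉ F, |x k| ≤ c} :=
  ⟨0, fun _ hc => decSet_nonneg hc⟩

lemma decSet_nonempty {x : ℕ → ℝ} (hx : ∃ C : ℝ, ∀ k, |x k| ≤ C) (n : ℕ) :
    Set.Nonempty {c : ℝ | ∃ F : Finset ℕ, F.card ≤ n ∧ ∀ k ∉ F, |x k| ≤ c} := by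
  obtain ⟨C, hC⟩ := hx
  exact ⟨C, ∅, by simp, fun k _ => hC k⟩

lemma decRearrange_nonneg {x : ℕ → ℝ} (hx : ∃ C : ℝ, ∀ k, |x k| ≤ C) (n : ℕ) :
    0 ≤ decRearrange x n :=
  le_csInf (decSet_nonempty hx n) fun _ hc => decSet_nonneg hc

/-- For a nonneg antitone sequence, the decreasing rearrangement is the sequence itself. -/
lemma decRearrange_of_antitone {x : ℕ → ℝ} (hanti : ∀ m k, m ≤ k → x k ≤ x m)
    (hpos : ∀ k, 0 ≤ x k) (n : ℕ) : decRearrange x n = x n := by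
  apply le_antisymm
  · apply csInf_le (decSet_bddBelow x n)
    refine ⟨Finset.range n, by simp, fun k hk => ?_⟩
    rw [abs_of_nonneg (hpos k)]
    exact hanti n k (by simpa using hk)
  · refine le_csInf (decSet_nonempty ⟨x 0, fun k => by rw [abs_of_nonneg (hpos k)]; exact hanti 0 k (Nat.zero_le k)⟩ n) ?_
    rintro c ⟨F, hcard, hF⟩
    have : ∃ k ∈ Finset.range (n + 1), k ∉ F := by
      by_contra h
      push_neg at h
      have hsub : Finset.range (n + 1) ⊆ F := fun k hk => h k hk
      have := Finset.card_le_card hsub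
      simp only [Finset.card_range] at this
      omega
    obtain ⟨k, hkmem, hknot⟩ := this
    have hk : k ≤ n := by simpa using Nat.lt_succ_iff.mp (Finset.mem_range.mp hkmem)
    calc x n ≤ x k := hanti k n hk
    _ ≤ |x k| := le_abs_self _
    _ ≤ c := hF k hknot

lemma decRearrange_mono {x y : ℕ → ℝ} (hy : ∃ C : ℝ, ∀ k, |y k| ≤ C)
    (h : ∀ k, |x k| ≤ |y k|) (n : ℕ) : decRearrange x n ≤ decRearrange y n := by
  apply csInf_le_csInf (decSet_bddBelow x n) (decSet_nonempty hy n)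
  rintro c ⟨F, hcard, hF⟩
  exact ⟨F, hcard, fun k hk => le_trans (h k) (hF k hk)⟩

/-- membership in the carrier by pointwise domination (for nonneg antitone dominators). -/
lemma mem_carrier_of_pointwise_le (S : BanachSymmSeqSpace) {x η : ℕ → ℝ}
    (hη : η ∈ S.carrier) (hηanti : ∀ m k, m ≤ k → η k ≤ η m) (hηpos : ∀ k, 0 ≤ η k)
    (hx : ∀ k, |x k| ≤ η k) : x ∈ S.carrier ∧ S.nrm x ≤ S.nrm η := by
  have hxb : ∃ C : ℝ, ∀ k, |x k| ≤ C := ⟨η 0, fun k => le_trans (hx k) (hηanti 0 k (Nat.zero_le k))⟩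
  have hηb : ∃ C : ℝ, ∀ k, |η k| ≤ C :=
    ⟨η 0, fun k => by rw [abs_of_nonneg (hηpos k)]; exact hηanti 0 k (Nat.zero_le k)⟩
  exact S.symmetric x η hη hxb fun n =>
    decRearrange_mono hηb (fun k => (hx k).trans (le_abs_self _)) n

/-- the even-spread of a sequence: `ξ₀, 0, ξ₁, 0, …` -/
lemma even_spread_mem (S : BanachSymmSeqSpace) {ξ : ℕ → ℝ} (hξ : ξ ∈ S.carrier)
    (hξb : ∃ C : ℝ, ∀ k, |ξ k| ≤ C) :
    (fun k => if k % 2 = 0 then ξ (k / 2) else 0) ∈ S.carrier := by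
  set u : ℕ → ℝ := fun k => if k % 2 = 0 then ξ (k / 2) else 0 with hu
  have hub : ∃ C : ℝ, ∀ k, |u k| ≤ C := by
    obtain ⟨C, hC⟩ := hξb
    refine ⟨max C 0, fun k => ?_⟩
    by_cases hk : k % 2 = 0
    · have huk : u k = ξ (k / 2) := by simp [hu, hk]
      rw [huk]; exact le_max_of_le_left (hC _)
    · have huk : u k = 0 := by simp [hu, hk]
      rw [huk, abs_zero]; exact le_max_right C 0
  refine (S.symmetric u ξ hξ hub fun n => ?_).1
  apply csInf_le_csInf (decSet_bddBelow u n) (decSet_nonempty hξb n)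
  rintro c ⟨F, hcard, hF⟩
  refine ⟨F.image (fun j => 2 * j), le_trans (Finset.card_image_le) hcard, fun k hk => ?_⟩
  by_cases hpar : k % 2 = 0
  · have hkk : k = 2 * (k / 2) := by omega
    have : k / 2 ∉ F := by
      intro hmem
      exact hk (Finset.mem_image.mpr ⟨k / 2, hmem, hkk.symm⟩)
    simpa [hu, hpar] using hF _ this
  · have : u k = 0 := by simp [hu, hpar]
    rw [this, abs_zero]
    obtain ⟨j, hj⟩ := F.exists_notMem
    exact le_trans (abs_nonneg _) (hF j hj)

lemma odd_spread_mem (S : BanachSymmSeqSpace) {ξ : ℕ → ℝ} (hξ : ξ ∈ S.carrier)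
    (hξb : ∃ C : ℝ, ∀ k, |ξ k| ≤ C) :
    (fun k => if k % 2 = 0 then 0 else ξ (k / 2)) ∈ S.carrier := by
  set u : ℕ → ℝ := fun k => if k % 2 = 0 then 0 else ξ (k / 2) with hu
  have hub : ∃ C : ℝ, ∀ k, |u k| ≤ C := by
    obtain ⟨C, hC⟩ := hξb
    refine ⟨max C 0, fun k => ?_⟩
    by_cases hk : k % 2 = 0
    · have huk : u k = 0 := by simp [hu, hk]
      rw [huk, abs_zero]; exact le_max_right C 0
    · have huk : u k = ξ (k / 2) := by simp [hu, hk]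
      rw [huk]; exact le_max_of_le_left (hC _)
  refine (S.symmetric u ξ hξ hub fun n => ?_).1
  apply csInf_le_csInf (decSet_bddBelow u n) (decSet_nonempty hξb n)
  rintro c ⟨F, hcard, hF⟩
  refine ⟨F.image (fun j => 2 * j + 1), le_trans (Finset.card_image_le) hcard, fun k hk => ?_⟩
  by_cases hpar : k % 2 = 0
  · have : u k = 0 := by simp [hu, hpar]
    rw [this, abs_zero]
    obtain ⟨j, hj⟩ := F.exists_notMem
    exact le_trans (abs_nonneg _) (hF j hj)
  · have hkk : k = 2 * (k / 2) + 1 := by omega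
    have : k / 2 ∉ F := by
      intro hmem
      exact hk (Finset.mem_image.mpr ⟨k / 2, hmem, hkk.symm⟩)
    simpa [hu, hpar] using hF _ this

/-- dilation: if `ξ ∈ E` then `n ↦ ξ (n/2) ∈ E`. -/
lemma dilate_mem (S : BanachSymmSeqSpace) {ξ : ℕ → ℝ} (hξ : ξ ∈ S.carrier)
    (hξb : ∃ C : ℝ, ∀ k, |ξ k| ≤ C) :
    (fun k => ξ (k / 2)) ∈ S.carrier := by
  have h := S.add_mem _ (even_spread_mem S hξ hξb) _ (odd_spread_mem S hξ hξb)
  have : ((fun k => if k % 2 = 0 then ξ (k / 2) else 0) + fun k => if k % 2 = 0 then 0 else ξ (k / 2)) = fun k => ξ (k / 2) := by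
    funext k
    by_cases hk : k % 2 = 0 <;> simp [hk]
  rwa [this] at h

end JordanAux
namespace JordanAux

set_option linter.unusedSectionVars false
set_option synthInstance.maxHeartbeats 1000000
set_option maxHeartbeats 1000000

section SingVal

variable {H : Type*} [NormedAddCommGroup H] [InnerProductSpace ℂ H] [CompleteSpace H]

/-- The set over which `singVal` takes the infimum. -/
def svSet (x : H →L[ℂ] H) (n : ℕ) : Set ℝ :=
  {c : ℝ | ∃ F : H →L[ℂ] H, FiniteDimensional ℂ (LinearMap.range (F : H →ₗ[ℂ] H)) ∧
    Module.finrank ℂ (LinearMap.range (F : H →ₗ[ℂ] H)) ≤ n ∧ ‖x - F‖ = c}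

lemma singVal_eq_sInf (x : H →L[ℂ] H) (n : ℕ) : singVal x n = sInf (svSet x n) := rfl

lemma range_zero_clm : LinearMap.range ((0 : H →L[ℂ] H) : H →ₗ[ℂ] H) = ⊥ := by
  ext v
  simp [LinearMap.mem_range, eq_comm]

lemma svSet_nonempty (x : H →L[ℂ] H) (n : ℕ) : (svSet x n).Nonempty := by
  refine ⟨‖x‖, 0, ?_, ?_, by simp⟩
  · rw [range_zero_clm]; infer_instance
  · rw [range_zero_clm]; simp

lemma svSet_nonneg {x : H →L[ℂ] H} {n : ℕ} {c : ℝ} (hc : c ∈ svSet x n) : 0 ≤ c := by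
  obtain ⟨F, -, -, hF⟩ := hc
  exact hF ▸ norm_nonneg _

lemma svSet_bddBelow (x : H →L[ℂ] H) (n : ℕ) : BddBelow (svSet x n) :=
  ⟨0, fun _ hc => svSet_nonneg hc⟩

lemma singVal_nonneg (x : H →L[ℂ] H) (n : ℕ) : 0 ≤ singVal x n :=
  le_csInf (svSet_nonempty x n) fun _ hc => svSet_nonneg hc

lemma singVal_le_of_cert {x F : H →L[ℂ] H} {n : ℕ}
    (h1 : FiniteDimensional ℂ (LinearMap.range (F : H →ₗ[ℂ] H)))
    (h2 : Module.finrank ℂ (LinearMap.range (F : H →ₗ[ℂ] H)) ≤ n) :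
    singVal x n ≤ ‖x - F‖ :=
  csInf_le (svSet_bddBelow x n) ⟨F, h1, h2, rfl⟩

lemma singVal_exists_cert (x : H →L[ℂ] H) (n : ℕ) {ε : ℝ} (hε : 0 < ε) :
    ∃ F : H →L[ℂ] H, FiniteDimensional ℂ (LinearMap.range (F : H →ₗ[ℂ] H)) ∧
      Module.finrank ℂ (LinearMap.range (F : H →ₗ[ℂ] H)) ≤ n ∧ ‖x - F‖ < singVal x n + ε := by
  obtain ⟨c, hc, hlt⟩ := Real.lt_sInf_add_pos (svSet_nonempty x n) hε
  obtain ⟨F, h1, h2, rfl⟩ := hc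
  exact ⟨F, h1, h2, hlt⟩

lemma singVal_le_norm (x : H →L[ℂ] H) (n : ℕ) : singVal x n ≤ ‖x‖ := by
  have := singVal_le_of_cert (x := x) (F := 0) (n := n)
    (by rw [range_zero_clm]; infer_instance) (by rw [range_zero_clm]; simp)
  simpa using this

lemma singVal_antitone (x : H →L[ℂ] H) {m n : ℕ} (h : m ≤ n) :
    singVal x n ≤ singVal x m := by
  apply le_csInf (svSet_nonempty x m)
  rintro c ⟨F, h1, h2, rfl⟩
  exact singVal_le_of_cert h1 (le_trans h2 h)

lemma singVal_bdd (x : H →L[ℂ] H) : ∃ C : ℝ, ∀ n, |singVal x n| ≤ C :=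
  ⟨‖x‖, fun n => by rw [abs_of_nonneg (singVal_nonneg x n)]; exact singVal_le_norm x n⟩

lemma singVal_add_le (x y : H →L[ℂ] H) (m n : ℕ) :
    singVal (x + y) (m + n) ≤ singVal x m + singVal y n := by
  refine le_of_forall_pos_le_add fun ε hε => ?_
  obtain ⟨F, hF1, hF2, hFlt⟩ := singVal_exists_cert x m (half_pos hε)
  obtain ⟨G, hG1, hG2, hGlt⟩ := singVal_exists_cert y n (half_pos hε)
  have hrange : LinearMap.range ((F + G : H →L[ℂ] H) : H →ₗ[ℂ] H) ≤ LinearMap.range (F : H →ₗ[ℂ] H) ⊔ LinearMap.range (G : H →ₗ[ℂ] H) := by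
    rintro v ⟨w, rfl⟩
    exact Submodule.add_mem_sup (LinearMap.mem_range_self _ w) (LinearMap.mem_range_self _ w)
  have hfd : FiniteDimensional ℂ (LinearMap.range ((F + G : H →L[ℂ] H) : H →ₗ[ℂ] H)) :=
    Submodule.finiteDimensional_of_le (h := hrange)
  have hrank : Module.finrank ℂ (LinearMap.range ((F + G : H →L[ℂ] H) : H →ₗ[ℂ] H)) ≤ m + n := by
    calc Module.finrank ℂ (LinearMap.range ((F + G : H →L[ℂ] H) : H →ₗ[ℂ] H))
        ≤ Module.finrank ℂ ((LinearMap.range (F : H →ₗ[ℂ] H)) ⊔ (LinearMap.range (G : H →ₗ[ℂ] H)) : Submodule ℂ H) :=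
          Submodule.finrank_mono hrange
      _ ≤ Module.finrank ℂ (LinearMap.range (F : H →ₗ[ℂ] H)) + Module.finrank ℂ (LinearMap.range (G : H →ₗ[ℂ] H)) :=
          Submodule.finrank_add_le_finrank_add_finrank _ _
      _ ≤ m + n := Nat.add_le_add hF2 hG2
  calc singVal (x + y) (m + n) ≤ ‖x + y - (F + G)‖ := singVal_le_of_cert hfd hrank
    _ ≤ ‖x - F‖ + ‖y - G‖ := by
        have : x + y - (F + G) = (x - F) + (y - G) := by abel
        rw [this]; exact norm_add_le _ _
    _ ≤ (singVal x m + ε / 2) + (singVal y n + ε / 2) :=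
        add_le_add hFlt.le hGlt.le
    _ = singVal x m + singVal y n + ε := by ring

lemma singVal_comp_left_le (u x : H →L[ℂ] H) (hu : ‖u‖ ≤ 1) (n : ℕ) :
    singVal (u * x) n ≤ singVal x n := by
  refine le_of_forall_pos_le_add fun ε hε => ?_
  obtain ⟨F, hF1, hF2, hFlt⟩ := singVal_exists_cert x n hε
  have hrange : LinearMap.range ((u * x * 0 + u * F : H →L[ℂ] H) : H →ₗ[ℂ] H) ≤ (LinearMap.range (F : H →ₗ[ℂ] H)).map (u : H →ₗ[ℂ] H) := by
    rintro v ⟨w, rfl⟩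
    simp only [ContinuousLinearMap.coe_coe, ContinuousLinearMap.mul_apply, ContinuousLinearMap.zero_apply,
      ContinuousLinearMap.add_apply, map_zero, zero_add]
    exact Submodule.mem_map_of_mem (LinearMap.mem_range_self _ w)
  have hfd : FiniteDimensional ℂ (LinearMap.range ((u * x * 0 + u * F : H →L[ℂ] H) : H →ₗ[ℂ] H)) :=
    Submodule.finiteDimensional_of_le (h := hrange)
  have hrank : Module.finrank ℂ (LinearMap.range ((u * x * 0 + u * F : H →L[ℂ] H) : H →ₗ[ℂ] H)) ≤ n :=
    le_trans (le_trans (Submodule.finrank_mono hrange) (Submodule.finrank_map_le _ _)) hF2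
  calc singVal (u * x) n ≤ ‖u * x - (u * x * 0 + u * F)‖ := singVal_le_of_cert hfd hrank
    _ = ‖u * (x - F)‖ := by
        congr 1
        simp only [mul_zero, zero_add]
        rw [mul_sub]
    _ ≤ ‖u‖ * ‖x - F‖ := norm_mul_le _ _
    _ ≤ 1 * ‖x - F‖ := by
        apply mul_le_mul_of_nonneg_right hu (norm_nonneg _)
    _ ≤ singVal x n + ε := by rw [one_mul]; exact hFlt.le

lemma singVal_comp_right_le (x w : H →L[ℂ] H) (hw : ‖w‖ ≤ 1) (n : ℕ) :
    singVal (x * w) n ≤ singVal x n := by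
  refine le_of_forall_pos_le_add fun ε hε => ?_
  obtain ⟨F, hF1, hF2, hFlt⟩ := singVal_exists_cert x n hε
  have hrange : LinearMap.range ((F * w : H →L[ℂ] H) : H →ₗ[ℂ] H) ≤ LinearMap.range (F : H →ₗ[ℂ] H) := by
    rintro v ⟨z, rfl⟩
    exact LinearMap.mem_range_self _ _
  have hfd : FiniteDimensional ℂ (LinearMap.range ((F * w : H →L[ℂ] H) : H →ₗ[ℂ] H)) :=
    Submodule.finiteDimensional_of_le (h := hrange)
  have hrank : Module.finrank ℂ (LinearMap.range ((F * w : H →L[ℂ] H) : H →ₗ[ℂ] H)) ≤ n :=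
    le_trans (Submodule.finrank_mono hrange) hF2
  calc singVal (x * w) n ≤ ‖x * w - F * w‖ := singVal_le_of_cert hfd hrank
    _ = ‖(x - F) * w‖ := by rw [sub_mul]
    _ ≤ ‖x - F‖ * ‖w‖ := norm_mul_le _ _
    _ ≤ ‖x - F‖ * 1 := mul_le_mul_of_nonneg_left hw (norm_nonneg _)
    _ ≤ singVal x n + ε := by rw [mul_one]; exact hFlt.le

lemma singVal_neg (x : H →L[ℂ] H) (n : ℕ) : singVal (-x) n = singVal x n := by
  have key : ∀ y : H →L[ℂ] H, ∀ k, singVal (-y) k ≤ singVal y k := by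
    intro y k
    refine le_of_forall_pos_le_add fun ε hε => ?_
    obtain ⟨F, hF1, hF2, hFlt⟩ := singVal_exists_cert y k hε
    have hrange : LinearMap.range ((-F : H →L[ℂ] H) : H →ₗ[ℂ] H) ≤ LinearMap.range (F : H →ₗ[ℂ] H) := by
      rintro v ⟨z, rfl⟩
      exact ⟨-z, by simp⟩
    have hfd : FiniteDimensional ℂ (LinearMap.range ((-F : H →L[ℂ] H) : H →ₗ[ℂ] H)) :=
      Submodule.finiteDimensional_of_le (h := hrange)
    have hrank : Module.finrank ℂ (LinearMap.range ((-F : H →L[ℂ] H) : H →ₗ[ℂ] H)) ≤ k :=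
      le_trans (Submodule.finrank_mono hrange) hF2
    calc singVal (-y) k ≤ ‖-y - -F‖ := singVal_le_of_cert hfd hrank
      _ = ‖y - F‖ := by rw [← norm_neg]; congr 1; abel
      _ ≤ singVal y k + ε := hFlt.le
  exact le_antisymm (key x n) (by simpa using key (-x) n)

lemma singVal_zero_op (n : ℕ) : singVal (0 : H →L[ℂ] H) n = 0 :=
  le_antisymm (by simpa using singVal_le_norm (0 : H →L[ℂ] H) n) (singVal_nonneg _ n)

lemma singVal_real_smul (c : ℝ) (x : H →L[ℂ] H) (n : ℕ) :
    singVal (c • x) n = |c| * singVal x n := by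
  have key : ∀ d : ℝ, ∀ y : H →L[ℂ] H, ∀ k, singVal (d • y) k ≤ |d| * singVal y k := by
    intro d y k
    rcases eq_or_ne d 0 with rfl | hd
    · simp [singVal_zero_op, singVal_nonneg]
    refine le_of_forall_pos_le_add fun ε hε => ?_
    have hε' : 0 < ε / |d| := div_pos hε (abs_pos.mpr hd)
    obtain ⟨F, hF1, hF2, hFlt⟩ := singVal_exists_cert y k hε'
    have hrange : LinearMap.range ((d • F : H →L[ℂ] H) : H →ₗ[ℂ] H) ≤ LinearMap.range (F : H →ₗ[ℂ] H) := by
      rintro v ⟨z, rfl⟩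
      exact ⟨d • z, by simp⟩
    have hfd : FiniteDimensional ℂ (LinearMap.range ((d • F : H →L[ℂ] H) : H →ₗ[ℂ] H)) :=
      Submodule.finiteDimensional_of_le (h := hrange)
    have hrank : Module.finrank ℂ (LinearMap.range ((d • F : H →L[ℂ] H) : H →ₗ[ℂ] H)) ≤ k :=
      le_trans (Submodule.finrank_mono hrange) hF2
    calc singVal (d • y) k ≤ ‖d • y - d • F‖ := singVal_le_of_cert hfd hrank
      _ = |d| * ‖y - F‖ := by rw [← smul_sub, norm_smul, Real.norm_eq_abs]
      _ ≤ |d| * (singVal y k + ε / |d|) :=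
          mul_le_mul_of_nonneg_left hFlt.le (abs_nonneg d)
      _ = |d| * singVal y k + ε := by
          rw [mul_add, mul_div_cancel₀ _ (ne_of_gt (abs_pos.mpr hd))]
  refine le_antisymm (key c x n) ?_
  rcases eq_or_ne c 0 with rfl | hc
  · simp [singVal_zero_op]
  have := key c⁻¹ (c • x) n
  rw [inv_smul_smul₀ hc, abs_inv] at this
  calc |c| * singVal x n ≤ |c| * (|c|⁻¹ * singVal (c • x) n) :=
        mul_le_mul_of_nonneg_left this (abs_nonneg c)
    _ = singVal (c • x) n := by
        field_simp
end SingVal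

end JordanAux
namespace JordanAux

set_option linter.unusedSectionVars false
set_option synthInstance.maxHeartbeats 1000000
set_option maxHeartbeats 1000000

section CEfacts

variable {H : Type*} [NormedAddCommGroup H] [InnerProductSpace ℂ H] [CompleteSpace H]
variable (S : BanachSymmSeqSpace)

local notation "T" => H →L[ℂ] H

lemma sseq_antitone (x : T) : ∀ m k, m ≤ k → singVal x k ≤ singVal x m :=
  fun _ _ h => singVal_antitone x h

lemma CE_zero : (0 : T) ∈ CE (H := H) S := by
  constructor
  · exact isCompactOperator_zero
  · have : (fun n => singVal (0 : T) n) = (0 : ℕ → ℝ) := by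
      funext n; exact singVal_zero_op n
    rw [this]; exact S.zero_mem

/-- Norm monotonicity in `C_E` from pointwise domination of singular values. -/
lemma CEnorm_mono {x y : T} (hy : y ∈ CE (H := H) S)
    (h : ∀ n, singVal x n ≤ singVal y n) :
    (fun n => singVal x n) ∈ S.carrier ∧ CEnorm S x ≤ CEnorm S y := by
  refine mem_carrier_of_pointwise_le S hy.2 (sseq_antitone y) (singVal_nonneg y) ?_
  intro k
  rw [abs_of_nonneg (singVal_nonneg x k)]
  exact h k

lemma CE_add {x y : T} (hx : x ∈ CE (H := H) S) (hy : y ∈ CE (H := H) S) :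
    x + y ∈ CE (H := H) S := by
  constructor
  · have := hx.1.add hy.1
    have hco : (⇑x + ⇑y) = ⇑(x + y) := by funext v; simp
    rwa [hco] at this
  · -- dominate by the dilated sum
    have hwx : (fun n => singVal x (n / 2)) ∈ S.carrier :=
      dilate_mem S hx.2 (singVal_bdd x)
    have hwy : (fun n => singVal y (n / 2)) ∈ S.carrier :=
      dilate_mem S hy.2 (singVal_bdd y)
    have hw : ((fun n => singVal x (n / 2)) + fun n => singVal y (n / 2)) ∈ S.carrier :=
      S.add_mem _ hwx _ hwy
    have hanti : ∀ m k, m ≤ k →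
        ((fun n => singVal x (n / 2)) + fun n => singVal y (n / 2)) k ≤
        ((fun n => singVal x (n / 2)) + fun n => singVal y (n / 2)) m := by
      intro m k hmk
      have h2 : m / 2 ≤ k / 2 := Nat.div_le_div_right hmk
      exact add_le_add (singVal_antitone x h2) (singVal_antitone y h2)
    have hpos : ∀ k, 0 ≤ ((fun n => singVal x (n / 2)) + fun n => singVal y (n / 2)) k :=
      fun k => add_nonneg (singVal_nonneg _ _) (singVal_nonneg _ _)
    refine (mem_carrier_of_pointwise_le S hw hanti hpos ?_).1
    intro n
    rw [abs_of_nonneg (singVal_nonneg _ _)]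
    have hsplit : n / 2 + (n - n / 2) = n := by omega
    have h1 : singVal (x + y) n ≤ singVal x (n / 2) + singVal y (n - n / 2) := by
      have := singVal_add_le x y (n / 2) (n - n / 2)
      rwa [hsplit] at this
    have h2 : singVal y (n - n / 2) ≤ singVal y (n / 2) :=
      singVal_antitone y (by omega)
    exact le_trans h1 (by simpa using add_le_add_left h2 (singVal x (n / 2)))

lemma CE_real_smul (c : ℝ) {x : T} (hx : x ∈ CE (H := H) S) :
    c • x ∈ CE (H := H) S := by
  constructor
  · have := hx.1.smul c
    have hco : (c • ⇑x) = ⇑(c • x) := by funext v; simp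
    rwa [hco] at this
  · have : (fun n => singVal (c • x) n) = |c| • fun n => singVal x n := by
      funext n
      simp [singVal_real_smul, Pi.smul_apply, smul_eq_mul]
    rw [this]
    exact S.smul_mem _ _ hx.2

lemma CEnorm_nonneg {x : T} (hx : x ∈ CE (H := H) S) : 0 ≤ CEnorm S x := by
  rcases eq_or_ne (fun n => singVal x n) (0 : ℕ → ℝ) with h | h
  · unfold CEnorm; rw [h, S.nrm_zero]
  · exact le_of_lt (S.nrm_pos _ hx.2 h)

lemma CEnorm_neg (x : T) : CEnorm S (-x) = CEnorm S x := by
  unfold CEnorm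
  congr 1
  funext n
  exact singVal_neg x n

lemma CEh_add {x y : T} (hx : x ∈ CEh (H := H) S) (hy : y ∈ CEh (H := H) S) :
    x + y ∈ CEh (H := H) S :=
  ⟨CE_add S hx.1 hy.1, hx.2.add hy.2⟩

lemma CEh_zero : (0 : T) ∈ CEh (H := H) S := ⟨CE_zero S, (IsSelfAdjoint.zero _)⟩

lemma CEh_real_smul (c : ℝ) {x : T} (hx : x ∈ CEh (H := H) S) :
    c • x ∈ CEh (H := H) S := by
  refine ⟨CE_real_smul S c hx.1, ?_⟩
  have : star (c • x) = c • star x := star_smul c x ▸ by norm_num [star_trivial]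
  rw [IsSelfAdjoint, this, hx.2]

lemma CEh_neg {x : T} (hx : x ∈ CEh (H := H) S) : -x ∈ CEh (H := H) S := by
  have := CEh_real_smul S (-1) hx
  simpa using this

end CEfacts

end JordanAux
namespace JordanAux

set_option linter.unusedSectionVars false
set_option synthInstance.maxHeartbeats 1000000
set_option maxHeartbeats 1000000

section Operators

variable {H : Type*} [NormedAddCommGroup H] [InnerProductSpace ℂ H] [CompleteSpace H]

local notation "T" => H →L[ℂ] H

open ContinuousLinearMap in
lemma inner_mul_self_apply {x : T} (hx : IsSelfAdjoint x) (v : H) :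
    RCLike.re ⟪(x * x) v, v⟫_ℂ = ‖x v‖ ^ 2 := by
  have hadj : ContinuousLinearMap.adjoint x = x := hx.adjoint_eq
  have h1 : (x * x) v = x (x v) := rfl
  rw [h1]
  have h2 := ContinuousLinearMap.adjoint_inner_left x v (x v)
  rw [hadj] at h2
  rw [h2, inner_self_eq_norm_sq]

lemma norm_apply_le_of_sq_le {x y : T} (hx : IsSelfAdjoint x) (hy : IsSelfAdjoint y)
    (h : x * x ≤ y * y) (v : H) : ‖x v‖ ≤ ‖y v‖ := by
  have hpos := (ContinuousLinearMap.le_def _ _).mp h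
  have h2 := hpos.2 v
  have h3 : ContinuousLinearMap.reApplyInnerSelf (y * y - x * x) v
      = RCLike.re ⟪(y * y) v, v⟫_ℂ - RCLike.re ⟪(x * x) v, v⟫_ℂ := by
    unfold ContinuousLinearMap.reApplyInnerSelf
    rw [ContinuousLinearMap.sub_apply, inner_sub_left, map_sub]
  rw [h3, inner_mul_self_apply hx, inner_mul_self_apply hy] at h2
  nlinarith [norm_nonneg (x v), norm_nonneg (y v)]

/-- Douglas-type lemma: if `‖y v‖ ≤ ‖z v‖` for all `v`, then `y = u z` with `‖u‖ ≤ 1`. -/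
lemma douglas {y z : T} (h : ∀ v, ‖y v‖ ≤ ‖z v‖) :
    ∃ u : T, ‖u‖ ≤ 1 ∧ u * z = y := by
  classical
  have hker : ∀ w, z w = 0 → y w = 0 := by
    intro w hw
    have := h w
    rw [hw, norm_zero] at this
    exact norm_le_zero_iff.mp this
  have hwd : ∀ v v', z v = z v' → y v = y v' := by
    intro v v' hv
    have : y (v - v') = 0 := hker _ (by rw [map_sub, hv, sub_self])
    rw [map_sub, sub_eq_zero] at this
    exact this
  set R : Submodule ℂ H := LinearMap.range (z : H →ₗ[ℂ] H) with hR
  have sel : ∀ m : R, ∃ v, z v = (m : H) := fun m => LinearMap.mem_range.mp m.2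
  set g : R → H := fun m => (sel m).choose with hgdef
  have hg : ∀ m : R, z (g m) = (m : H) := fun m => (sel m).choose_spec
  set T0 : R →ₗ[ℂ] H :=
    { toFun := fun m => y (g m)
      map_add' := by
        intro m m'
        show y (g (m + m')) = y (g m) + y (g m')
        have h1 : z (g (m + m')) = z (g m + g m') := by
          rw [map_add, hg, hg, hg]; rfl
        rw [hwd _ _ h1, map_add]
      map_smul' := by
        intro c m
        show y (g (c • m)) = c • y (g m)
        have h1 : z (g (c • m)) = z (c • g m) := by
          rw [map_smul, hg, hg]; rfl
        rw [hwd _ _ h1, map_smul] } with hT0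
  have hbound : ∀ m : R, ‖T0 m‖ ≤ 1 * ‖m‖ := by
    intro m
    have : ‖y (g m)‖ ≤ ‖z (g m)‖ := h _
    rw [hg m] at this
    simpa [hT0] using this
  set T0L : R →L[ℂ] H := LinearMap.mkContinuous T0 1 hbound with hT0L
  have hT0Lnorm : ‖T0L‖ ≤ 1 := LinearMap.mkContinuous_norm_le T0 zero_le_one hbound
  set Rc := R.topologicalClosure with hRc
  set incl : R →ₗ[ℂ] Rc := Submodule.inclusion R.le_topologicalClosure with hincl
  have hinclnorm : ∀ m : R, ‖incl m‖ = ‖m‖ := fun m => rfl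
  set inclL : R →L[ℂ] Rc := LinearMap.mkContinuous incl 1
    (fun m => by rw [hinclnorm m, one_mul]) with hinclL
  have hinclLval : ∀ m : R, ((inclL m : Rc) : H) = (m : H) := fun m => rfl
  have hiso : Isometry inclL := AddMonoidHomClass.isometry_of_norm inclL (fun m => rfl)
  have hdense : DenseRange inclL := by
    intro w
    rw [Metric.mem_closure_iff]
    intro ε hε
    have hw : (w : H) ∈ closure (R : Set H) := by
      have h2 : (w : H) ∈ (R.topologicalClosure : Set H) := w.2
      have h3 : (R.topologicalClosure : Set H) = closure (R : Set H) :=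
        Submodule.topologicalClosure_coe R
      exact h3 ▸ h2
    rw [Metric.mem_closure_iff] at hw
    obtain ⟨r, hrR, hdist⟩ := hw ε hε
    refine ⟨inclL ⟨r, hrR⟩, ⟨⟨r, hrR⟩, rfl⟩, ?_⟩
    rw [Subtype.dist_eq]
    exact hdist
  have hbnd : ∀ m : R, ‖m‖ ≤ (1 : NNReal) * ‖inclL m‖ := by
    intro m
    rw [NNReal.coe_one, one_mul]
    exact le_of_eq rfl
  set T1 : Rc →L[ℂ] H := T0L.extend inclL with hT1
  have hT1eq : ∀ m : R, T1 (inclL m) = T0L m := fun m =>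
    ContinuousLinearMap.extend_eq T0L hdense
      (ContinuousLinearMap.isUniformEmbedding_of_bound inclL hbnd).isUniformInducing m
  have hT1norm : ‖T1‖ ≤ 1 := by
    have := ContinuousLinearMap.opNorm_extend_le T0L hdense hbnd
    calc ‖T1‖ ≤ (1 : NNReal) * ‖T0L‖ := this
      _ ≤ 1 := by rw [NNReal.coe_one, one_mul]; exact hT0Lnorm
  have : CompleteSpace Rc := Submodule.topologicalClosure.completeSpace R
  set u : T := T1.comp (Submodule.orthogonalProjection Rc) with hu
  refine ⟨u, ?_, ?_⟩
  · calc ‖u‖ ≤ ‖T1‖ * ‖Submodule.orthogonalProjection Rc‖ := ContinuousLinearMap.opNorm_comp_le _ _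
      _ ≤ 1 * 1 := mul_le_mul hT1norm (Submodule.orthogonalProjection_norm_le Rc) (norm_nonneg (Submodule.orthogonalProjection Rc)) zero_le_one
      _ = 1 := one_mul 1
  · ext v
    have hzR : z v ∈ R := LinearMap.mem_range_self (z : H →ₗ[ℂ] H) v
    have hzRc : z v ∈ Rc := R.le_topologicalClosure hzR
    have hP : Submodule.orthogonalProjection Rc (z v) = ⟨z v, hzRc⟩ := by
      exact Submodule.orthogonalProjection_mem_subspace_eq_self (⟨z v, hzRc⟩ : Rc)
    have hmem : (⟨z v, hzRc⟩ : Rc) = inclL ⟨z v, hzR⟩ := rfl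
    have : u (z v) = y v := by
      rw [hu]
      show T1 (Submodule.orthogonalProjection Rc (z v)) = y v
      rw [hP, hmem, hT1eq]
      show y (g ⟨z v, hzR⟩) = y v
      exact hwd _ _ (by rw [hg ⟨z v, hzR⟩])
    simpa using this

end Operators

end JordanAux
namespace JordanAux

set_option linter.unusedSectionVars false
set_option synthInstance.maxHeartbeats 1000000
set_option maxHeartbeats 1000000

section PosPartEtc

variable {H : Type*} [NormedAddCommGroup H] [InnerProductSpace ℂ H] [CompleteSpace H]
variable (S : BanachSymmSeqSpace)

local notation "T" => H →L[ℂ] H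

lemma op_smul_nonneg {c : ℝ} (hc : 0 ≤ c) {z : T} (hz : 0 ≤ z) : 0 ≤ c • z := by
  rw [ContinuousLinearMap.nonneg_iff_isPositive, ContinuousLinearMap.isPositive_def'] at hz ⊢
  constructor
  · have h1 : star (c • z) = c • star z := star_smul c z |>.trans (by norm_num [star_trivial])
    rw [IsSelfAdjoint, h1, hz.1]
  · intro v
    have h1 : ContinuousLinearMap.reApplyInnerSelf (c • z) v
        = c * ContinuousLinearMap.reApplyInnerSelf z v := by
      unfold ContinuousLinearMap.reApplyInnerSelf
      have h2 : (c • z) v = ((c : ℂ)) • z v := by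
        rw [ContinuousLinearMap.smul_apply]
        rw [← algebraMap_smul ℂ c (z v)]
        rfl
      rw [h2, inner_smul_left]
      simp [Complex.conj_ofReal]
    rw [h1]
    exact mul_nonneg hc (hz.2 v)

lemma op_mul_compact {x u : T} (hx : IsCompactOperator (⇑x)) : IsCompactOperator (⇑(u * x)) := by
  have := hx.clm_comp (g := u)
  have hco : (⇑u ∘ ⇑x) = ⇑(u * x) := by funext v; rfl
  rwa [hco] at this

lemma op_compact_mul {x w : T} (hx : IsCompactOperator (⇑x)) : IsCompactOperator (⇑(x * w)) := by
  have := hx.comp_clm (g := w)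
  have hco : (⇑x ∘ ⇑w) = ⇑(x * w) := by funext v; rfl
  rwa [hco] at this

/-- The positive part of a self-adjoint element of `C_E^h` stays in `C_E^h`. -/
lemma posPart_mem_CEh {x : T} (hx : x ∈ CEh (H := H) S) :
    x⁺ ∈ CEh (H := H) S ∧ 0 ≤ x⁺ ∧ x ≤ x⁺ ∧ CEnorm S x⁺ ≤ CEnorm S x := by
  have hsa : IsSelfAdjoint x := hx.2
  have hppos : (0 : T) ≤ x⁺ := CFC.posPart_nonneg x
  have hpsa : IsSelfAdjoint (x⁺ : T) := hppos.isSelfAdjoint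
  -- (x⁺)² ≤ x²
  have hsq : (x⁺ : T) * x⁺ ≤ x * x := by
    have hdecomp : x * x = x⁺ * x⁺ + x⁻ * x⁻ := by
      conv_lhs => rw [← CFC.posPart_sub_negPart x hsa]
      rw [sub_mul, mul_sub, mul_sub]
      rw [CFC.posPart_mul_negPart, CFC.negPart_mul_posPart]
      abel
    have hneg : (0 : T) ≤ x⁻ * x⁻ := by
      have h1 : star (x⁻ : T) = x⁻ := (CFC.negPart_nonneg x).isSelfAdjoint
      have := star_mul_self_nonneg (x⁻ : T)
      rwa [h1] at this
    calc (x⁺ : T) * x⁺ ≤ x⁺ * x⁺ + x⁻ * x⁻ := le_add_of_nonneg_right hneg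
      _ = x * x := hdecomp.symm
  have hnorm : ∀ v, ‖(x⁺ : T) v‖ ≤ ‖x v‖ := norm_apply_le_of_sq_le hpsa hsa hsq
  obtain ⟨u, hu1, hu2⟩ := douglas hnorm
  have hcompact : IsCompactOperator (⇑(x⁺ : T)) := by
    rw [← hu2]
    exact op_mul_compact hx.1.1
  have hsv : ∀ n, singVal (x⁺ : T) n ≤ singVal x n := by
    intro n
    rw [← hu2]
    exact singVal_comp_left_le u x hu1 n
  obtain ⟨hmem, hnrm⟩ := CEnorm_mono S hx.1 hsv
  exact ⟨⟨⟨hcompact, hmem⟩, hpsa⟩, hppos, CFC.le_posPart hsa, hnrm⟩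

/-- Conjugation `c ↦ u c u*` by a contraction maps the positive part of `C_E^h` to itself,
decreasing the norm. -/
lemma conj_mem_CEh {c : T} (hc : c ∈ CEh (H := H) S) (hcpos : 0 ≤ c)
    (u : T) (hu : ‖u‖ ≤ 1) :
    u * c * star u ∈ CEh (H := H) S ∧ 0 ≤ u * c * star u ∧
      CEnorm S (u * c * star u) ≤ CEnorm S c := by
  have hpos : (0 : T) ≤ u * c * star u := by
    rw [ContinuousLinearMap.nonneg_iff_isPositive] at hcpos ⊢
    have := hcpos.conj_adjoint (S := u)
    rw [ContinuousLinearMap.star_eq_adjoint]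
    have hassoc : u ∘L c ∘L (ContinuousLinearMap.adjoint u)
        = u * c * (ContinuousLinearMap.adjoint u) := by
      rw [mul_assoc]; rfl
    rwa [hassoc] at this
  have hcompact : IsCompactOperator (⇑(u * c * star u)) := by
    have h1 : IsCompactOperator (⇑(c * star u)) := op_compact_mul hc.1.1
    have h2 : IsCompactOperator (⇑(u * (c * star u))) := op_mul_compact h1
    rwa [← mul_assoc] at h2
  have hsv : ∀ n, singVal (u * c * star u) n ≤ singVal c n := by
    intro n
    have h1 : singVal (u * (c * star u)) n ≤ singVal (c * star u) n :=
      singVal_comp_left_le u (c * star u) hu n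
    have h2 : singVal (c * star u) n ≤ singVal c n :=
      singVal_comp_right_le c (star u) (by rw [norm_star]; exact hu) n
    calc singVal (u * c * star u) n = singVal (u * (c * star u)) n := by rw [mul_assoc]
      _ ≤ singVal c n := le_trans h1 h2
  obtain ⟨hmem, hnrm⟩ := CEnorm_mono S hc.1 hsv
  exact ⟨⟨⟨hcompact, hmem⟩, hpos.isSelfAdjoint⟩, hpos, hnrm⟩

/-- sums of lists of elements of `C_E^h`. -/
lemma list_sum_mem_CEh (L : List T) (hL : ∀ c ∈ L, c ∈ CEh (H := H) S) :
    L.sum ∈ CEh (H := H) S := by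
  induction L with
  | nil => simpa using CEh_zero S
  | cons a t ih =>
      rw [List.sum_cons]
      exact CEh_add S (hL a (List.mem_cons_self)) (ih fun c hc => hL c (List.mem_cons_of_mem a hc))

lemma list_sum_nonneg_op (L : List T) (hL : ∀ c ∈ L, (0 : T) ≤ c) : (0 : T) ≤ L.sum := by
  induction L with
  | nil => simp
  | cons a t ih =>
      rw [List.sum_cons]
      exact add_nonneg (hL a (List.mem_cons_self)) (ih fun c hc => hL c (List.mem_cons_of_mem a hc))

lemma mul_list_sum_mul (u w : T) (L : List T) :
    u * L.sum * w = (L.map fun c => u * c * w).sum := by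
  induction L with
  | nil => simp
  | cons a t ih =>
      rw [List.sum_cons, List.map_cons, List.sum_cons, ← ih]
      rw [mul_add, add_mul]

end PosPartEtc

end JordanAux
namespace JordanAux

set_option linter.unusedSectionVars false
set_option synthInstance.maxHeartbeats 1000000
set_option maxHeartbeats 1000000

section Main

variable {H : Type*} [NormedAddCommGroup H] [InnerProductSpace ℂ H] [CompleteSpace H]

local notation "T" => H →L[ℂ] H

lemma real_complex_smul (c : ℝ) (a : T) : ((c : ℂ)) • a = c • a := by
  rw [← algebraMap_smul ℂ c a]
  norm_num

lemma CEnorm_real_smul (S : BanachSymmSeqSpace) (c : ℝ) {a : T} (ha : a ∈ CE (H := H) S) :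
    CEnorm S (c • a) = |c| * CEnorm S a := by
  unfold CEnorm
  have h1 : (fun n => singVal (c • a) n) = |c| • fun n => singVal a n := by
    funext n
    simp [singVal_real_smul, Pi.smul_apply, smul_eq_mul]
  rw [h1, S.nrm_smul _ _ ha.2, abs_abs]

lemma op_smul_le {c : ℝ} (hc : 0 ≤ c) {a b : T} (hab : a ≤ b) : c • a ≤ c • b := by
  have h1 : (0 : T) ≤ c • (b - a) := op_smul_nonneg hc (sub_nonneg.mpr hab)
  rw [smul_sub] at h1
  exact sub_nonneg.mp h1

variable (S : BanachSymmSeqSpace) (f : (H →L[ℂ] H) → ℝ)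
variable (hadd : ∀ a ∈ CEh (H := H) S, ∀ b ∈ CEh (H := H) S, f (a + b) = f a + f b)
variable (hhom : ∀ (c : ℝ), ∀ a ∈ CEh (H := H) S, f (((c : ℂ)) • a) = c * f a)
variable (M₀ : ℝ) (hM₀ : 0 ≤ M₀)
variable (hM : ∀ a ∈ CEh (H := H) S, |f a| ≤ M₀ * CEnorm S a)

section ffacts

include hadd

lemma f_zero : f 0 = 0 := by
  have h0 := hadd 0 (CEh_zero S) 0 (CEh_zero S)
  rw [add_zero] at h0
  linarith

lemma f_list_sum (L : List T) (hL : ∀ c ∈ L, c ∈ CEh (H := H) S) :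
    f L.sum = (L.map f).sum := by
  induction L with
  | nil => simpa using f_zero S f hadd
  | cons a t ih =>
      rw [List.sum_cons, List.map_cons, List.sum_cons]
      rw [hadd a (hL a (List.mem_cons_self)) t.sum
        (list_sum_mem_CEh S t fun c hc => hL c (List.mem_cons_of_mem a hc))]
      rw [ih fun c hc => hL c (List.mem_cons_of_mem a hc)]

include hM₀ hM in
/-- **Key bound**: if `0 ≤ d ≤ Σ cⱼ` with all `cⱼ ≥ 0` in `C_E^h`, then
`f d ≤ M₀ Σ ‖cⱼ‖`. -/
lemma key_bound {d : T} (hd : d ∈ CEh (H := H) S) (hdpos : 0 ≤ d)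
    {L : List T} (hL : ∀ c ∈ L, c ∈ CEh (H := H) S ∧ 0 ≤ c)
    (hle : d ≤ L.sum) : f d ≤ M₀ * (L.map (CEnorm S)).sum := by
  classical
  set s : T := L.sum with hs
  have hspos : (0 : T) ≤ s := list_sum_nonneg_op L fun c hc => (hL c hc).2
  -- square roots
  set sd : T := CFC.sqrt d with hsd
  set ss : T := CFC.sqrt s with hss
  have hsdpos : (0 : T) ≤ sd := CFC.sqrt_nonneg d
  have hsspos : (0 : T) ≤ ss := CFC.sqrt_nonneg s
  have hsdsa : IsSelfAdjoint sd := hsdpos.isSelfAdjoint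
  have hsssa : IsSelfAdjoint ss := hsspos.isSelfAdjoint
  have hsdsq : sd * sd = d := CFC.sqrt_mul_sqrt_self d hdpos
  have hsssq : ss * ss = s := CFC.sqrt_mul_sqrt_self s hspos
  have hnorm : ∀ v, ‖sd v‖ ≤ ‖ss v‖ :=
    norm_apply_le_of_sq_le hsdsa hsssa (by rw [hsdsq, hsssq]; exact hle)
  obtain ⟨u, hu1, hu2⟩ := douglas hnorm
  -- `u s u* = d`
  have hid : u * s * star u = d := by
    have h1 : u * s * star u = (u * ss) * star (u * ss) := by
      rw [star_mul, hsssa.star_eq, ← hsssq]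
      rw [mul_assoc, mul_assoc, mul_assoc]
    rw [h1, hu2, hsdsa.star_eq, hsdsq]
  have hdecomp : d = (L.map fun c => u * c * star u).sum := by
    rw [← hid, hs, mul_list_sum_mul]
  -- memberships of the pieces
  have hpieces : ∀ c ∈ L, (u * c * star u) ∈ CEh (H := H) S ∧ 0 ≤ u * c * star u ∧
      CEnorm S (u * c * star u) ≤ CEnorm S c := by
    intro c hc
    exact conj_mem_CEh S (hL c hc).1 (hL c hc).2 u hu1
  have hmemmap : ∀ c' ∈ (L.map fun c => u * c * star u), c' ∈ CEh (H := H) S := by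
    intro c' hc'
    obtain ⟨c, hc, rfl⟩ := List.mem_map.mp hc'
    exact (hpieces c hc).1
  calc f d = ((L.map fun c => u * c * star u).map f).sum := by
        rw [hdecomp]
        exact f_list_sum S f hadd _ hmemmap
    _ = (L.map fun c => f (u * c * star u)).sum := by rw [List.map_map]; rfl
    _ ≤ (L.map fun c => M₀ * CEnorm S c).sum := by
        apply List.sum_le_sum
        intro c hc
        calc f (u * c * star u) ≤ |f (u * c * star u)| := le_abs_self _
          _ ≤ M₀ * CEnorm S (u * c * star u) := hM _ (hpieces c hc).1
          _ ≤ M₀ * CEnorm S c := mul_le_mul_of_nonneg_left (hpieces c hc).2.2 hM₀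
    _ = M₀ * (L.map (CEnorm S)).sum := by
        rw [← List.sum_map_mul_left]

end ffacts

end Main

end JordanAux
namespace JordanAux

set_option linter.unusedSectionVars false
set_option linter.unusedVariables false
set_option synthInstance.maxHeartbeats 1000000
set_option maxHeartbeats 1000000

section Main2

variable {H : Type*} [NormedAddCommGroup H] [InnerProductSpace ℂ H] [CompleteSpace H]

local notation "T" => H →L[ℂ] H

/-- `C_E^h` as a real submodule of `B(H)`. -/
def Wsub (S : BanachSymmSeqSpace) : Submodule ℝ (H →L[ℂ] H) where
  carrier := CEh (H := H) S
  add_mem' := fun hx hy => CEh_add S hx hy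
  zero_mem' := CEh_zero S
  smul_mem' := fun c x hx => CEh_real_smul S c hx

variable (S : BanachSymmSeqSpace) (f : (H →L[ℂ] H) → ℝ)
variable (hadd : ∀ a ∈ CEh (H := H) S, ∀ b ∈ CEh (H := H) S, f (a + b) = f a + f b)
variable (hhom : ∀ (c : ℝ), ∀ a ∈ CEh (H := H) S, f (((c : ℂ)) • a) = c * f a)
variable (M₀ : ℝ) (hM₀ : 0 ≤ M₀)
variable (hM : ∀ a ∈ CEh (H := H) S, |f a| ≤ M₀ * CEnorm S a)

/-- The certificate set for the sublinear functional. -/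
def Qset (x : Wsub (H := H) S) : Set ℝ :=
  {r | ∃ L : List (H →L[ℂ] H), ∃ dd : H →L[ℂ] H,
    (∀ c ∈ L, c ∈ CEh (H := H) S ∧ 0 ≤ c) ∧ (dd ∈ CEh (H := H) S ∧ 0 ≤ dd) ∧
    ((x : H →L[ℂ] H) + dd ≤ L.sum) ∧ r = M₀ * (L.map (CEnorm S)).sum - f dd}

include hadd hhom hM₀ hM in
lemma exists_decomposition :
    ∃ g h : (H →L[ℂ] H) → ℝ,
      RealFunctionalOn S g ∧ RealFunctionalOn S h ∧
      (∀ a ∈ CEh (H := H) S, a.IsPositive → 0 ≤ g a) ∧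
      (∀ a ∈ CEh (H := H) S, a.IsPositive → 0 ≤ h a) ∧
      (∀ a ∈ CEh (H := H) S, f a = g a - h a) := by
  classical
  set W := Wsub (H := H) S with hWdef
  have hxmem : ∀ x : W, (x : T) ∈ CEh (H := H) S := fun x => x.2
  have hpp : ∀ x : W, ((x : T))⁺ ∈ CEh (H := H) S ∧ 0 ≤ ((x : T))⁺ ∧
      (x : T) ≤ ((x : T))⁺ ∧ CEnorm S ((x : T))⁺ ≤ CEnorm S (x : T) :=
    fun x => posPart_mem_CEh S (hxmem x)
  set q : W → ℝ := fun x => sInf (Qset S f M₀ x) with hqdef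
  -- nonemptiness
  have hQne : ∀ x : W, (Qset S f M₀ x).Nonempty := by
    intro x
    refine ⟨M₀ * (([((x : T))⁺].map (CEnorm S)).sum) - f 0, [((x : T))⁺], 0, ?_, ?_, ?_, rfl⟩
    · intro c hc
      rw [List.mem_singleton] at hc
      subst hc
      exact ⟨(hpp x).1, (hpp x).2.1⟩
    · exact ⟨CEh_zero S, le_refl 0⟩
    · rw [add_zero]
      simpa using (hpp x).2.2.1
  -- lower bound on certificates
  have hQlb : ∀ x : W, ∀ r ∈ Qset S f M₀ x, -(M₀ * CEnorm S ((-(x : T))⁺)) ≤ r := by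
    intro x r hr
    obtain ⟨L, dd, hL, hdd, hle, rfl⟩ := hr
    have hnp := posPart_mem_CEh S (CEh_neg S (hxmem x))
    have h1 : dd ≤ (L ++ [(-(x : T))⁺]).sum := by
      rw [List.sum_append]
      calc dd = ((x : T) + dd) + (-(x : T)) := by abel
        _ ≤ L.sum + (-(x : T)) := add_le_add_left hle _
        _ ≤ L.sum + ([(-(x : T))⁺]).sum := by
            apply add_le_add_right
            simpa using hnp.2.2.1
    have hpieces : ∀ c ∈ L ++ [(-(x : T))⁺], c ∈ CEh (H := H) S ∧ 0 ≤ c := by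
      intro c hc
      rcases List.mem_append.mp hc with h | h
      · exact hL c h
      · rw [List.mem_singleton] at h
        subst h
        exact ⟨hnp.1, hnp.2.1⟩
    have hkb := key_bound S f hadd M₀ hM₀ hM hdd.1 hdd.2 hpieces h1
    rw [List.map_append, List.sum_append, mul_add] at hkb
    have h2 : (([(-(x : T))⁺]).map (CEnorm S)).sum = CEnorm S ((-(x : T))⁺) := by simp
    rw [h2] at hkb
    linarith
  have hQbdd : ∀ x : W, BddBelow (Qset S f M₀ x) := fun x => ⟨_, fun r hr => hQlb x r hr⟩
  have hq_le : ∀ x : W, ∀ r ∈ Qset S f M₀ x, q x ≤ r := fun x r hr => csInf_le (hQbdd x) hr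
  have hq_le_pos : ∀ x : W, q x ≤ M₀ * CEnorm S ((x : T))⁺ := by
    intro x
    obtain ⟨r, hr⟩ := hQne x
    have hcert : (M₀ * (([((x : T))⁺].map (CEnorm S)).sum) - f 0) ∈ Qset S f M₀ x := by
      refine ⟨[((x : T))⁺], 0, ?_, ⟨CEh_zero S, le_refl 0⟩, ?_, rfl⟩
      · intro c hc
        rw [List.mem_singleton] at hc
        subst hc
        exact ⟨(hpp x).1, (hpp x).2.1⟩
      · rw [add_zero]
        simpa using (hpp x).2.2.1
    have := hq_le x _ hcert
    simpa [f_zero S f hadd] using this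
  -- subadditivity
  have hq_add : ∀ x y : W, q (x + y) ≤ q x + q y := by
    intro x y
    refine le_of_forall_pos_le_add fun ε hε => ?_
    obtain ⟨r1, hr1, hr1lt⟩ := Real.lt_sInf_add_pos (hQne x) (half_pos hε)
    obtain ⟨r2, hr2, hr2lt⟩ := Real.lt_sInf_add_pos (hQne y) (half_pos hε)
    obtain ⟨L1, d1, hL1, hd1, hle1, rfl⟩ := hr1
    obtain ⟨L2, d2, hL2, hd2, hle2, rfl⟩ := hr2
    have hcert : (M₀ * ((L1 ++ L2).map (CEnorm S)).sum - f (d1 + d2)) ∈ Qset S f M₀ (x + y) := by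
      refine ⟨L1 ++ L2, d1 + d2, ?_, ⟨CEh_add S hd1.1 hd2.1, add_nonneg hd1.2 hd2.2⟩, ?_, rfl⟩
      · intro c hc
        rcases List.mem_append.mp hc with h | h
        exacts [hL1 c h, hL2 c h]
      · have hco : ((x + y : W) : T) = (x : T) + (y : T) := rfl
        rw [hco, List.sum_append]
        calc (x : T) + (y : T) + (d1 + d2) = ((x : T) + d1) + ((y : T) + d2) := by abel
          _ ≤ L1.sum + L2.sum := add_le_add hle1 hle2
    have hval := hq_le _ _ hcert
    rw [List.map_append, List.sum_append, mul_add, hadd d1 hd1.1 d2 hd2.1] at hval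
    have e1 : sInf (Qset S f M₀ x) = q x := rfl
    have e2 : sInf (Qset S f M₀ y) = q y := rfl
    rw [e1] at hr1lt
    rw [e2] at hr2lt
    calc q (x + y) ≤ (M₀ * (L1.map (CEnorm S)).sum + M₀ * (L2.map (CEnorm S)).sum)
          - (f d1 + f d2) := hval
      _ = (M₀ * (L1.map (CEnorm S)).sum - f d1) + (M₀ * (L2.map (CEnorm S)).sum - f d2) := by ring
      _ ≤ (q x + ε / 2) + (q y + ε / 2) := add_le_add hr1lt.le hr2lt.le
      _ = q x + q y + ε := by ring
  -- positive homogeneity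
  have hq_smul : ∀ (c : ℝ), 0 < c → ∀ x : W, q (c • x) = c * q x := by
    have key : ∀ (c : ℝ), 0 < c → ∀ x : W, q (c • x) ≤ c * q x := by
      intro c hc x
      refine le_of_forall_pos_le_add fun ε hε => ?_
      obtain ⟨r, hr, hrlt⟩ := Real.lt_sInf_add_pos (hQne x) (div_pos hε hc)
      obtain ⟨L, dd, hL, hdd, hle, rfl⟩ := hr
      have hcert : (M₀ * ((L.map (fun a => c • a)).map (CEnorm S)).sum - f (c • dd))
          ∈ Qset S f M₀ (c • x) := by
        refine ⟨L.map (fun a => c • a), c • dd,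
          ?_, ⟨CEh_real_smul S c hdd.1, op_smul_nonneg hc.le hdd.2⟩, ?_, rfl⟩
        · intro c' hc'
          obtain ⟨a, ha, rfl⟩ := List.mem_map.mp hc'
          exact ⟨CEh_real_smul S c (hL a ha).1, op_smul_nonneg hc.le (hL a ha).2⟩
        · have hco : ((c • x : W) : T) = c • (x : T) := rfl
          rw [hco, ← smul_add]
          have hsum : (L.map (fun a => c • a)).sum = c • L.sum := (List.smul_sum).symm
          rw [hsum]
          exact op_smul_le hc.le hle
      have hval : M₀ * ((L.map (fun a => c • a)).map (CEnorm S)).sum - f (c • dd)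
          = c * (M₀ * (L.map (CEnorm S)).sum - f dd) := by
        have h1 : (L.map (fun a => c • a)).map (CEnorm S) = L.map (fun a => c * CEnorm S a) := by
          rw [List.map_map]
          apply List.map_congr_left
          intro a ha
          show CEnorm S (c • a) = c * CEnorm S a
          rw [CEnorm_real_smul S c (hL a ha).1.1, abs_of_pos hc]
        have h2 : f (c • dd) = c * f dd := by
          rw [← real_complex_smul]
          exact hhom c dd hdd.1
        rw [h1, h2, List.sum_map_mul_left]
        ring
      have hle2 := hq_le _ _ hcert
      rw [hval] at hle2
      have e1 : sInf (Qset S f M₀ x) = q x := rfl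
      rw [e1] at hrlt
      calc q (c • x) ≤ c * (M₀ * (L.map (CEnorm S)).sum - f dd) := hle2
        _ ≤ c * (q x + ε / c) := mul_le_mul_of_nonneg_left hrlt.le hc.le
        _ = c * q x + ε := by
            rw [mul_add, mul_div_cancel₀ _ (ne_of_gt hc)]
    intro c hc x
    refine le_antisymm (key c hc x) ?_
    have h2 := key c⁻¹ (inv_pos.mpr hc) (c • x)
    rw [inv_smul_smul₀ (ne_of_gt hc)] at h2
    calc c * q x ≤ c * (c⁻¹ * q (c • x)) := mul_le_mul_of_nonneg_left h2 hc.le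
      _ = q (c • x) := by field_simp
  -- q 0 is nonnegative
  have hq0 : 0 ≤ q 0 := by
    apply le_csInf (hQne 0)
    rintro r ⟨L, dd, hL, hdd, hle, rfl⟩
    have h1 : dd ≤ L.sum := by
      have hco : ((0 : W) : T) = 0 := rfl
      rwa [hco, zero_add] at hle
    have := key_bound S f hadd M₀ hM₀ hM hdd.1 hdd.2 hL h1
    linarith
  -- Hahn-Banach
  obtain ⟨G, -, hG⟩ := exists_extension_of_le_sublinear (⟨⊥, 0⟩ : (W →ₗ.[ℝ] ℝ)) q
    (fun c hc x => hq_smul c hc x) (fun x y => hq_add x y)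
    (fun x => by
      have hx0 : (x : W) = 0 := by
        have h := x.2
        rwa [Submodule.mem_bot] at h
      show (0 : ℝ) ≤ q (x : W)
      rw [hx0]
      exact hq0)
  -- bounds on G
  have hGb1 : ∀ x : W, G x ≤ M₀ * CEnorm S (x : T) := by
    intro x
    calc G x ≤ q x := hG x
      _ ≤ M₀ * CEnorm S ((x : T))⁺ := hq_le_pos x
      _ ≤ M₀ * CEnorm S (x : T) := mul_le_mul_of_nonneg_left (hpp x).2.2.2 hM₀
  have hGabs : ∀ x : W, |G x| ≤ M₀ * CEnorm S (x : T) := by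
    intro x
    rw [abs_le]
    constructor
    · have h1 := hGb1 (-x)
      have hco : ((-x : W) : T) = -(x : T) := rfl
      rw [map_neg, hco, CEnorm_neg] at h1
      linarith
    · exact hGb1 x
  have hGpos : ∀ x : W, 0 ≤ (x : T) → 0 ≤ G x := by
    intro x hx
    have hcert : (M₀ * (([] : List (H →L[ℂ] H)).map (CEnorm S)).sum - f 0) ∈ Qset S f M₀ (-x) := by
      refine ⟨[], 0, by simp, ⟨CEh_zero S, le_refl 0⟩, ?_, rfl⟩
      have hco : ((-x : W) : T) = -(x : T) := rfl
      rw [hco, add_zero, List.sum_nil]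
      exact neg_nonpos.mpr hx
    have h2 := le_trans (hG (-x)) (hq_le _ _ hcert)
    have h3 : M₀ * (([] : List (H →L[ℂ] H)).map (CEnorm S)).sum - f 0 = 0 := by
      simp [f_zero S f hadd]
    rw [map_neg, h3] at h2
    linarith
  have hGgef : ∀ x : W, 0 ≤ (x : T) → f (x : T) ≤ G x := by
    intro x hx
    have hcert : (M₀ * (([] : List (H →L[ℂ] H)).map (CEnorm S)).sum - f (x : T))
        ∈ Qset S f M₀ (-x) := by
      refine ⟨[], (x : T), by simp, ⟨hxmem x, hx⟩, ?_, rfl⟩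
      have hco : ((-x : W) : T) = -(x : T) := rfl
      rw [hco, List.sum_nil]
      simp
    have h2 := le_trans (hG (-x)) (hq_le _ _ hcert)
    have h3 : M₀ * (([] : List (H →L[ℂ] H)).map (CEnorm S)).sum - f (x : T) = -f (x : T) := by
      simp
    rw [map_neg, h3] at h2
    linarith
  -- assembly
  refine ⟨fun a => if ha : a ∈ CEh (H := H) S then G ⟨a, ha⟩ else 0,
          fun a => if ha : a ∈ CEh (H := H) S then G ⟨a, ha⟩ - f a else 0, ?_, ?_, ?_, ?_, ?_⟩
  · refine ⟨?_, ?_, ⟨M₀, ?_⟩⟩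
    · intro a ha b hb
      have hab := CEh_add S ha hb
      dsimp only
      rw [dif_pos ha, dif_pos hb, dif_pos hab]
      have heq : (⟨a + b, hab⟩ : W) = ⟨a, ha⟩ + ⟨b, hb⟩ := rfl
      rw [heq, map_add]
    · intro c a ha
      have hmem : ((c : ℂ)) • a ∈ CEh (H := H) S := by
        rw [real_complex_smul]
        exact CEh_real_smul S c ha
      dsimp only
      rw [dif_pos ha, dif_pos hmem]
      have heq : (⟨((c : ℂ)) • a, hmem⟩ : W) = c • ⟨a, ha⟩ := by
        apply Subtype.ext
        show ((c : ℂ)) • a = c • a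
        exact real_complex_smul c a
      rw [heq, map_smul]
      rfl
    · intro a ha
      dsimp only
      rw [dif_pos ha]
      exact hGabs ⟨a, ha⟩
  · refine ⟨?_, ?_, ⟨M₀ + M₀, ?_⟩⟩
    · intro a ha b hb
      have hab := CEh_add S ha hb
      dsimp only
      rw [dif_pos ha, dif_pos hb, dif_pos hab]
      have heq : (⟨a + b, hab⟩ : W) = ⟨a, ha⟩ + ⟨b, hb⟩ := rfl
      rw [heq, map_add, hadd a ha b hb]
      ring
    · intro c a ha
      have hmem : ((c : ℂ)) • a ∈ CEh (H := H) S := by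
        rw [real_complex_smul]
        exact CEh_real_smul S c ha
      dsimp only
      rw [dif_pos ha, dif_pos hmem]
      have heq : (⟨((c : ℂ)) • a, hmem⟩ : W) = c • ⟨a, ha⟩ := by
        apply Subtype.ext
        show ((c : ℂ)) • a = c • a
        exact real_complex_smul c a
      rw [heq, map_smul, hhom c a ha]
      show c * G ⟨a, ha⟩ - c * f a = c * (G ⟨a, ha⟩ - f a)
      ring
    · intro a ha
      dsimp only
      rw [dif_pos ha]
      rw [sub_eq_add_neg]
      refine le_trans (abs_add_le _ _) ?_
      rw [abs_neg]
      have h1 := hGabs ⟨a, ha⟩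
      have h2 := hM a ha
      have h3 : (M₀ + M₀) * CEnorm S a = M₀ * CEnorm S a + M₀ * CEnorm S a := by ring
      rw [h3]
      exact add_le_add h1 h2
  · intro a ha hpos
    dsimp only
    rw [dif_pos ha]
    exact hGpos ⟨a, ha⟩ ((ContinuousLinearMap.nonneg_iff_isPositive a).mpr hpos)
  · intro a ha hpos
    dsimp only
    rw [dif_pos ha]
    rw [sub_nonneg]
    exact hGgef ⟨a, ha⟩ ((ContinuousLinearMap.nonneg_iff_isPositive a).mpr hpos)
  · intro a ha
    dsimp only
    rw [dif_pos ha, dif_pos ha]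
    ring

end Main2

end JordanAux

/-- Every continuous real-linear functional on the real Banach space
`C_E^h` of self-adjoint elements of `C_E` is the difference of two positive continuous
linear functionals on `C_E^h`. -/
theorem functional_difference_of_positives
    {H : Type*} [NormedAddCommGroup H] [InnerProductSpace ℂ H] [CompleteSpace H]
    [TopologicalSpace.SeparableSpace H] (hinf : ¬ FiniteDimensional ℂ H)
    (S : BanachSymmSeqSpace) (hc0 : S.SubsetC0)
    (f : (H →L[ℂ] H) → ℝ) (hf : RealFunctionalOn S f) :
    ∃ g h : (H →L[ℂ] H) → ℝ,
      RealFunctionalOn S g ∧ RealFunctionalOn S h ∧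
      (∀ a ∈ CEh (H := H) S, a.IsPositive → 0 ≤ g a) ∧
      (∀ a ∈ CEh (H := H) S, a.IsPositive → 0 ≤ h a) ∧
      (∀ a ∈ CEh (H := H) S, f a = g a - h a) := by
  obtain ⟨hadd, hhom, M, hM⟩ := hf
  have hM₀ : (0 : ℝ) ≤ |M| + 1 := by positivity
  have hM' : ∀ a ∈ CEh (H := H) S, |f a| ≤ (|M| + 1) * CEnorm S a := by
    intro a ha
    refine le_trans (hM a ha) ?_
    refine mul_le_mul_of_nonneg_right ?_ (JordanAux.CEnorm_nonneg S ha.1)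
    have := le_abs_self M
    linarith
  exact JordanAux.exists_decomposition S f hadd hhom (|M| + 1) hM₀ hM'
end

section
/- Let H be a complex separable infinite-dimensional Hilbert space, let E ⊆ c₀ be a Banach symmetric sequence space, and let C_E be the associated Banach symmetric ideal. If x_n ∈ C_E are positive operators with x_{n+1} ≤ x_n for all n and x_n ↓ 0, then the absolutely convex hull A of the set {0, x_1, x_2, …} in the real Banach space C_E^h = { x ∈ C_E : x = x* } is a Rosenthal set: every sequence in A has a weakly Cauchy subsequence, i.e. a subsequence {y_{n_i}} such that the limit lim_i f(y_{n_i}) exists for every continuous real-linear functional f on C_E^h. -/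
open scoped InnerProductSpace
open Filter Topology

section SeqLemmas

lemma decRearrange_set_nonempty {x : ℕ → ℝ} (hx : ∃ C, ∀ n, |x n| ≤ C) (n : ℕ) :
    {c : ℝ | ∃ F : Finset ℕ, F.card ≤ n ∧ ∀ k ∉ F, |x k| ≤ c}.Nonempty := by
  obtain ⟨C, hC⟩ := hx
  exact ⟨C, ∅, by simp, fun k _ => hC k⟩

lemma decRearrange_set_bddBelow (x : ℕ → ℝ) (n : ℕ) :
    BddBelow {c : ℝ | ∃ F : Finset ℕ, F.card ≤ n ∧ ∀ k ∉ F, |x k| ≤ c} := by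
  refine ⟨0, fun c hc => ?_⟩
  obtain ⟨F, _, hF⟩ := hc
  obtain ⟨k, hk⟩ := Infinite.exists_notMem_finset F
  exact le_trans (abs_nonneg _) (hF k hk)

/-- monotonicity of the decreasing rearrangement -/
lemma decRearrange_mono {x y : ℕ → ℝ} (hy : ∃ C, ∀ n, |y n| ≤ C)
    (h : ∀ n, |x n| ≤ |y n|) (n : ℕ) : decRearrange x n ≤ decRearrange y n := by
  apply csInf_le_csInf (decRearrange_set_bddBelow x n) (decRearrange_set_nonempty hy n)
  rintro c ⟨F, hcard, hF⟩
  exact ⟨F, hcard, fun k hk => (h k).trans (hF k hk)⟩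

/-- for a nonneg nonincreasing sequence, `s n ≤ s* n`. -/
lemma le_decRearrange_self {s : ℕ → ℝ} (hmono : ∀ i j, i ≤ j → s j ≤ s i)
    (hpos : ∀ n, 0 ≤ s n) (n : ℕ) : s n ≤ decRearrange s n := by
  apply le_csInf (decRearrange_set_nonempty ⟨s 0, fun k => by
    rw [abs_of_nonneg (hpos k)]; exact hmono 0 k (Nat.zero_le k)⟩ n)
  rintro c ⟨F, hcard, hF⟩
  have : ¬ (Finset.range (n+1) ⊆ F) := by
    intro hsub
    have := Finset.card_le_card hsub
    simp only [Finset.card_range] at this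
    omega
  obtain ⟨k, hk1, hk2⟩ := Finset.not_subset.mp this
  have hkn : k ≤ n := Nat.lt_succ_iff.mp (Finset.mem_range.mp hk1)
  calc s n ≤ s k := hmono k n hkn
    _ = |s k| := (abs_of_nonneg (hpos k)).symm
    _ ≤ c := hF k hk2

/-- spread sequence: `s (k/4)` at positions `≡ r (mod 4)`, else `0`. -/
def sprd (r : ℕ) (s : ℕ → ℝ) : ℕ → ℝ := fun k => if k % 4 = r then s (k / 4) else 0

lemma sprd_decRearrange_le {s : ℕ → ℝ} (hmono : ∀ i j, i ≤ j → s j ≤ s i)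
    (hpos : ∀ n, 0 ≤ s n) (r n : ℕ) : decRearrange (sprd r s) n ≤ s n := by
  apply csInf_le (decRearrange_set_bddBelow _ n)
  refine ⟨(Finset.range n).image (fun j => 4 * j + r), le_trans Finset.card_image_le (by simp), ?_⟩
  intro k hk
  by_cases hkr : k % 4 = r
  · simp only [sprd, hkr, if_true]
    rw [abs_of_nonneg (hpos _)]
    apply hmono
    by_contra hlt
    push_neg at hlt
    apply hk
    refine Finset.mem_image.mpr ⟨k / 4, Finset.mem_range.mpr hlt, ?_⟩
    omega
  · simp [sprd, hkr, hpos n]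

lemma sum_sprd (s : ℕ → ℝ) (k : ℕ) : (∑ r ∈ Finset.range 4, sprd r s k) = s (k / 4) := by
  have h4 : k % 4 < 4 := Nat.mod_lt _ (by norm_num)
  simp only [sprd]
  rw [Finset.sum_ite_eq (Finset.range 4) (k % 4) (fun _ => s (k / 4))]
  simp [h4]

/-- domination lemma for the symmetric sequence space -/
lemma mem_of_dominated (S : BanachSymmSeqSpace) {s : ℕ → ℝ} (hs : s ∈ S.carrier)
    (hmono : ∀ i j, i ≤ j → s j ≤ s i) (hpos : ∀ n, 0 ≤ s n)
    {x : ℕ → ℝ} {C : ℝ} (hC : 0 ≤ C) (hx : ∀ n, |x n| ≤ C * s (n / 4)) :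
    x ∈ S.carrier ∧ S.nrm x ≤ 4 * C * S.nrm s := by
  have hsbd : ∃ B, ∀ n, |s n| ≤ B :=
    ⟨s 0, fun k => by rw [abs_of_nonneg (hpos k)]; exact hmono 0 k (Nat.zero_le k)⟩
  have hsprd : ∀ r : ℕ, sprd r s ∈ S.carrier ∧ S.nrm (sprd r s) ≤ S.nrm s := by
    intro r
    apply S.symmetric _ _ hs
    · obtain ⟨B, hB⟩ := hsbd
      refine ⟨B, fun n => ?_⟩
      by_cases hnr : n % 4 = r
      · simpa [sprd, hnr] using hB (n / 4)
      · have : (0:ℝ) ≤ B := le_trans (abs_nonneg _) (hB 0)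
        simpa [sprd, hnr] using this
    · intro n
      exact le_trans (sprd_decRearrange_le hmono hpos r n) (le_decRearrange_self hmono hpos n)
  -- the sum of the four spreads
  set g : ℕ → ℝ := ((sprd 0 s + sprd 1 s) + sprd 2 s) + sprd 3 s with hg
  have hgmem : g ∈ S.carrier ∧ S.nrm g ≤ 4 * S.nrm s := by
    have h01 : sprd 0 s + sprd 1 s ∈ S.carrier :=
      S.add_mem _ (hsprd 0).1 _ (hsprd 1).1
    have h012 : (sprd 0 s + sprd 1 s) + sprd 2 s ∈ S.carrier :=
      S.add_mem _ h01 _ (hsprd 2).1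
    have h0123 : g ∈ S.carrier := S.add_mem _ h012 _ (hsprd 3).1
    have hn01 := S.nrm_triangle _ (hsprd 0).1 _ (hsprd 1).1
    have hn012 := S.nrm_triangle _ h01 _ (hsprd 2).1
    have hn0123 := S.nrm_triangle _ h012 _ (hsprd 3).1
    have h0 := (hsprd 0).2; have h1 := (hsprd 1).2
    have h2 := (hsprd 2).2; have h3 := (hsprd 3).2
    exact ⟨h0123, by rw [hg]; linarith⟩
  have hCg : (C • g) ∈ S.carrier := S.smul_mem C g hgmem.1
  have hCgn : S.nrm (C • g) = C * S.nrm g := by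
    rw [S.nrm_smul C g hgmem.1, abs_of_nonneg hC]
  have hgk : ∀ k, g k = s (k / 4) := by
    intro k
    have := sum_sprd s k
    simp only [Finset.sum_range_succ, Finset.sum_range_zero, zero_add] at this
    rw [hg]
    simpa [Pi.add_apply] using this
  have hmain := S.symmetric x (C • g) hCg
    (by
      obtain ⟨B, hB⟩ := hsbd
      exact ⟨C * B, fun n => le_trans (hx n) (by
        have := hB (n / 4)
        rw [abs_of_nonneg (hpos _)] at this
        exact mul_le_mul_of_nonneg_left this hC)⟩)
    (by
      intro n
      apply decRearrange_mono
      · obtain ⟨B, hB⟩ := hsbd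
        refine ⟨C * B, fun k => ?_⟩
        simp only [Pi.smul_apply, smul_eq_mul, hgk k]
        rw [abs_mul, abs_of_nonneg hC]
        exact mul_le_mul_of_nonneg_left (hB _) hC
      · intro k
        simp only [Pi.smul_apply, smul_eq_mul, hgk k]
        rw [abs_mul, abs_of_nonneg hC, abs_of_nonneg (hpos _)]
        exact hx k)
  refine ⟨hmain.1, ?_⟩
  calc S.nrm x ≤ S.nrm (C • g) := hmain.2
    _ = C * S.nrm g := hCgn
    _ ≤ C * (4 * S.nrm s) := by
        apply mul_le_mul_of_nonneg_left hgmem.2 hC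
    _ = 4 * C * S.nrm s := by ring

/-- norm of a carrier element is nonnegative -/
lemma nrm_nonneg_of_mem (S : BanachSymmSeqSpace) {x : ℕ → ℝ} (hx : x ∈ S.carrier) :
    0 ≤ S.nrm x := by
  by_cases h : x = 0
  · rw [h, S.nrm_zero]
  · exact le_of_lt (S.nrm_pos x hx h)

end SeqLemmas
section SingValLemmas

variable {H : Type*} [NormedAddCommGroup H] [InnerProductSpace ℂ H] [CompleteSpace H]

lemma range_zero_clm : LinearMap.range (((0 : H →L[ℂ] H) : H →L[ℂ] H) : H →ₗ[ℂ] H) = ⊥ := by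
  ext ξ
  simp [LinearMap.mem_range, eq_comm]

lemma zero_mem_svSet (x : H →L[ℂ] H) (n : ℕ) :
    ‖x‖ ∈ {c : ℝ | ∃ F : H →L[ℂ] H, FiniteDimensional ℂ (LinearMap.range (F : H →ₗ[ℂ] H)) ∧
      Module.finrank ℂ (LinearMap.range (F : H →ₗ[ℂ] H)) ≤ n ∧ ‖x - F‖ = c} := by
  refine ⟨0, ?_, ?_, by simp⟩
  · rw [range_zero_clm]; infer_instance
  · rw [range_zero_clm]; simp

lemma svSet_nonempty (x : H →L[ℂ] H) (n : ℕ) :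
    {c : ℝ | ∃ F : H →L[ℂ] H, FiniteDimensional ℂ (LinearMap.range (F : H →ₗ[ℂ] H)) ∧
      Module.finrank ℂ (LinearMap.range (F : H →ₗ[ℂ] H)) ≤ n ∧ ‖x - F‖ = c}.Nonempty :=
  ⟨‖x‖, zero_mem_svSet x n⟩

lemma svSet_bddBelow (x : H →L[ℂ] H) (n : ℕ) :
    BddBelow {c : ℝ | ∃ F : H →L[ℂ] H, FiniteDimensional ℂ (LinearMap.range (F : H →ₗ[ℂ] H)) ∧
      Module.finrank ℂ (LinearMap.range (F : H →ₗ[ℂ] H)) ≤ n ∧ ‖x - F‖ = c} := by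
  refine ⟨0, fun c hc => ?_⟩
  obtain ⟨F, _, _, hF⟩ := hc
  rw [← hF]; exact norm_nonneg _

lemma singVal_nonneg (x : H →L[ℂ] H) (n : ℕ) : 0 ≤ singVal x n := by
  apply le_csInf (svSet_nonempty x n)
  rintro c ⟨F, _, _, hF⟩
  rw [← hF]; exact norm_nonneg _

lemma singVal_antitone (x : H →L[ℂ] H) {n m : ℕ} (h : n ≤ m) : singVal x m ≤ singVal x n := by
  apply csInf_le_csInf (svSet_bddBelow x m) (svSet_nonempty x n)
  rintro c ⟨F, h1, h2, h3⟩
  exact ⟨F, h1, h2.trans h, h3⟩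

lemma singVal_le_norm (x : H →L[ℂ] H) (n : ℕ) : singVal x n ≤ ‖x‖ :=
  csInf_le (svSet_bddBelow x n) (zero_mem_svSet x n)

lemma singVal_exists_lt (x : H →L[ℂ] H) (n : ℕ) {ε : ℝ} (hε : 0 < ε) :
    ∃ F : H →L[ℂ] H, FiniteDimensional ℂ (LinearMap.range (F : H →ₗ[ℂ] H)) ∧
      Module.finrank ℂ (LinearMap.range (F : H →ₗ[ℂ] H)) ≤ n ∧ ‖x - F‖ < singVal x n + ε := by
  have h : singVal x n < singVal x n + ε := by linarith
  obtain ⟨c, hc, hlt⟩ := exists_lt_of_csInf_lt (svSet_nonempty x n) h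
  obtain ⟨F, h1, h2, h3⟩ := hc
  exact ⟨F, h1, h2, by rw [h3]; exact hlt⟩

lemma singVal_le_of_rank_le (x F : H →L[ℂ] H) (n : ℕ)
    (h1 : FiniteDimensional ℂ (LinearMap.range (F : H →ₗ[ℂ] H)))
    (h2 : Module.finrank ℂ (LinearMap.range (F : H →ₗ[ℂ] H)) ≤ n) :
    singVal x n ≤ ‖x - F‖ :=
  csInf_le (svSet_bddBelow x n) ⟨F, h1, h2, rfl⟩

/-- Ky Fan additive inequality for approximation numbers. -/
lemma singVal_add_le (a b : H →L[ℂ] H) (m n : ℕ) :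
    singVal (a + b) (m + n) ≤ singVal a m + singVal b n := by
  refine le_of_forall_pos_le_add fun ε hε => ?_
  obtain ⟨F, hF1, hF2, hF3⟩ := singVal_exists_lt a m (half_pos hε)
  obtain ⟨G, hG1, hG2, hG3⟩ := singVal_exists_lt b n (half_pos hε)
  haveI := hF1; haveI := hG1
  have hrange : LinearMap.range (((F + G) : H →L[ℂ] H) : H →ₗ[ℂ] H) ≤ LinearMap.range (F : H →ₗ[ℂ] H) ⊔ LinearMap.range (G : H →ₗ[ℂ] H) := by
    rintro ζ hζ
    obtain ⟨ξ, rfl⟩ := LinearMap.mem_range.mp hζ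
    exact Submodule.add_mem_sup (LinearMap.mem_range_self _ ξ) (LinearMap.mem_range_self _ ξ)
  have hFD : FiniteDimensional ℂ (LinearMap.range (((F + G) : H →L[ℂ] H) : H →ₗ[ℂ] H)) :=
    Submodule.finiteDimensional_of_le hrange
  have hrank : Module.finrank ℂ (LinearMap.range (((F + G) : H →L[ℂ] H) : H →ₗ[ℂ] H)) ≤ m + n :=
    le_trans (Submodule.finrank_mono hrange)
      (le_trans (Submodule.finrank_add_le_finrank_add_finrank _ _) (Nat.add_le_add hF2 hG2))
  have hre : a + b - (F + G) = (a - F) + (b - G) := by abel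
  calc singVal (a + b) (m + n) ≤ ‖(a + b) - (F + G)‖ :=
        singVal_le_of_rank_le _ _ _ hFD hrank
    _ = ‖(a - F) + (b - G)‖ := by rw [hre]
    _ ≤ ‖a - F‖ + ‖b - G‖ := norm_add_le _ _
    _ ≤ singVal a m + singVal b n + ε := by linarith

lemma singVal_neg (v : H →L[ℂ] H) (n : ℕ) : singVal (-v) n = singVal v n := by
  have key : ∀ w : H →L[ℂ] H, singVal (-w) n ≤ singVal w n := by
    intro w
    refine le_of_forall_pos_le_add fun ε hε => ?_
    obtain ⟨F, hF1, hF2, hF3⟩ := singVal_exists_lt w n hε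
    haveI := hF1
    have hrange : LinearMap.range (((-F) : H →L[ℂ] H) : H →ₗ[ℂ] H) ≤ LinearMap.range (F : H →ₗ[ℂ] H) := by
      rintro ζ hζ
      obtain ⟨ξ, rfl⟩ := LinearMap.mem_range.mp hζ
      exact ⟨-ξ, by simp⟩
    have h1 : FiniteDimensional ℂ (LinearMap.range (((-F) : H →L[ℂ] H) : H →ₗ[ℂ] H)) :=
      Submodule.finiteDimensional_of_le hrange
    have h2 : Module.finrank ℂ (LinearMap.range (((-F) : H →L[ℂ] H) : H →ₗ[ℂ] H)) ≤ n :=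
      le_trans (Submodule.finrank_mono hrange) hF2
    have hre : (-w) - (-F) = -(w - F) := by abel
    calc singVal (-w) n ≤ ‖(-w) - (-F)‖ := singVal_le_of_rank_le _ _ _ h1 h2
      _ = ‖w - F‖ := by rw [hre, norm_neg]
      _ ≤ singVal w n + ε := le_of_lt hF3
  refine le_antisymm (key v) ?_
  have := key (-v)
  rwa [neg_neg] at this

lemma singVal_real_smul_le (c : ℝ) (x : H →L[ℂ] H) (n : ℕ) (hc : 0 ≤ c) :
    singVal ((c : ℂ) • x) n ≤ c * singVal x n := by
  refine le_of_forall_pos_le_add fun ε hε => ?_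
  have hc1 : (0:ℝ) < c + 1 := by linarith
  obtain ⟨F, hF1, hF2, hF3⟩ := singVal_exists_lt x n (div_pos hε hc1)
  haveI := hF1
  have hrange : LinearMap.range ((((c:ℂ) • F) : H →L[ℂ] H) : H →ₗ[ℂ] H) ≤ LinearMap.range (F : H →ₗ[ℂ] H) := by
    rintro ζ hζ
    obtain ⟨ξ, rfl⟩ := LinearMap.mem_range.mp hζ
    refine ⟨(c:ℂ) • ξ, by simp⟩
  have h1 : FiniteDimensional ℂ (LinearMap.range ((((c:ℂ) • F) : H →L[ℂ] H) : H →ₗ[ℂ] H)) :=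
    Submodule.finiteDimensional_of_le hrange
  have h2 : Module.finrank ℂ (LinearMap.range ((((c:ℂ) • F) : H →L[ℂ] H) : H →ₗ[ℂ] H)) ≤ n :=
    le_trans (Submodule.finrank_mono hrange) hF2
  calc singVal ((c:ℂ) • x) n ≤ ‖(c:ℂ) • x - (c:ℂ) • F‖ := singVal_le_of_rank_le _ _ _ h1 h2
    _ = c * ‖x - F‖ := by
        rw [← smul_sub, norm_smul]
        simp [abs_of_nonneg hc]
    _ ≤ c * (singVal x n + ε / (c+1)) :=
        mul_le_mul_of_nonneg_left (le_of_lt hF3) hc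
    _ ≤ c * singVal x n + ε := by
        have h2' : c * (ε / (c+1)) ≤ ε := by
          rw [mul_div_assoc', div_le_iff₀ hc1]
          nlinarith
        nlinarith

end SingValLemmas
section OperatorOrder

variable {H : Type*} [NormedAddCommGroup H] [InnerProductSpace ℂ H] [CompleteSpace H]

/-- Norm monotonicity for positive operators. -/
lemma norm_le_norm_of_isPositive {a b : H →L[ℂ] H} (ha : a.IsPositive)
    (hab : (b - a).IsPositive) : ‖a‖ ≤ ‖b‖ := by
  have h0a : (0 : H →L[ℂ] H) ≤ a := (ContinuousLinearMap.nonneg_iff_isPositive a).mpr ha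
  have hab' : a ≤ b := (ContinuousLinearMap.le_def a b).mpr hab
  exact CStarAlgebra.norm_le_norm_of_nonneg_of_le h0a hab'

lemma isPositive_real_smul {c : ℝ} (hc : 0 ≤ c) {T : H →L[ℂ] H} (hT : T.IsPositive) :
    ((c : ℂ) • T).IsPositive := by
  exact hT.smul_of_nonneg (Complex.zero_le_real.mpr hc)

/-- key rank-2n approximation lemma: `s_{2n}(a) ≤ s_n(b)` for `0 ≤ a ≤ b`. -/
lemma singVal_two_mul_le {a b : H →L[ℂ] H} (ha : a.IsPositive) (hab : (b - a).IsPositive)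
    (n : ℕ) : singVal a (n + n) ≤ singVal b n := by
  apply le_csInf (svSet_nonempty b n)
  rintro c ⟨F, hF1, hF2, rfl⟩
  haveI := hF1
  set V : Submodule ℂ H := LinearMap.range (F : H →ₗ[ℂ] H) with hV
  haveI : CompleteSpace V := FiniteDimensional.complete ℂ V
  set Q : H →L[ℂ] H := V.subtypeL ∘L V.orthogonalProjectionOnto with hQ
  set P : H →L[ℂ] H := 1 - Q with hP
  have hQsa : IsSelfAdjoint Q := isSelfAdjoint_starProjection V
  have hPsa : IsSelfAdjoint P := by
    rw [hP, IsSelfAdjoint, star_sub, star_one, hQsa.star_eq]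
  have hPadj : ContinuousLinearMap.adjoint P = P := hPsa.adjoint_eq
  -- PaP is positive, P(b-a)P is positive
  have hPaP : (P ∘L a ∘L P).IsPositive := by
    have := ha.adjoint_conj P
    rwa [hPadj] at this
  have hPbaP : (P ∘L (b - a) ∘L P).IsPositive := by
    have := hab.adjoint_conj P
    rwa [hPadj] at this
  -- norm inequality
  have hdiff : P ∘L b ∘L P - P ∘L a ∘L P = P ∘L (b - a) ∘L P := by
    simp only [ContinuousLinearMap.comp_sub, ContinuousLinearMap.sub_comp]
  have hnorm1 : ‖P ∘L a ∘L P‖ ≤ ‖P ∘L b ∘L P‖ := by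
    apply norm_le_norm_of_isPositive hPaP
    rw [hdiff]
    exact hPbaP
  -- Q fixes V
  have hQfix : ∀ ξ : H, Q (F ξ) = F ξ := by
    intro ξ
    have : F ξ ∈ V := LinearMap.mem_range_self _ ξ
    simp only [hQ, ContinuousLinearMap.comp_apply, Submodule.subtypeL_apply]
    exact Submodule.starProjection_eq_self_iff.mpr this
  have hPF : P ∘L F = 0 := by
    ext ξ
    simp only [ContinuousLinearMap.comp_apply, ContinuousLinearMap.zero_apply, hP,
      ContinuousLinearMap.sub_apply, ContinuousLinearMap.one_apply]
    rw [hQfix ξ]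
    abel
  -- ‖P‖ ≤ 1 via idempotence and self-adjointness
  have hQidem : Q ∘L Q = Q := by
    ext ξ
    simp only [hQ, ContinuousLinearMap.comp_apply, Submodule.subtypeL_apply]
    congr 1
    exact Submodule.orthogonalProjectionOnto_mem_subspace_eq_self _
  have hPidem : P ∘L P = P := by
    show P * P = P
    have hq : Q * Q = Q := hQidem
    rw [hP]
    have expand : (1 - Q) * (1 - Q) = 1 - Q - Q + Q * Q := by noncomm_ring
    rw [expand, hq]
    noncomm_ring
  have hPnorm : ∀ ξ, ‖P ξ‖ ≤ ‖ξ‖ := by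
    intro ξ
    have hsq : (‖P ξ‖:ℝ)^2 = RCLike.re ⟪ξ, P ξ⟫_ℂ := by
      have h1 : ⟪P ξ, P ξ⟫_ℂ = ⟪ξ, P (P ξ)⟫_ℂ :=
        (ContinuousLinearMap.isSelfAdjoint_iff_isSymmetric.mp hPsa) ξ (P ξ)
      have h2 : P (P ξ) = P ξ := by
        have := congrArg (fun T : H →L[ℂ] H => T ξ) hPidem
        simpa [ContinuousLinearMap.comp_apply] using this
      rw [h2] at h1
      rw [← inner_self_eq_norm_sq (𝕜 := ℂ) (P ξ), h1]
    have hle : RCLike.re ⟪ξ, P ξ⟫_ℂ ≤ ‖ξ‖ * ‖P ξ‖ := by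
      calc RCLike.re ⟪ξ, P ξ⟫_ℂ ≤ ‖⟪ξ, P ξ⟫_ℂ‖ := RCLike.re_le_norm _
        _ ≤ ‖ξ‖ * ‖P ξ‖ := norm_inner_le_norm _ _
    nlinarith [norm_nonneg (P ξ), norm_nonneg ξ]
  have hPopnorm : ‖P‖ ≤ 1 := by
    apply ContinuousLinearMap.opNorm_le_bound _ zero_le_one
    intro ξ
    rw [one_mul]
    exact hPnorm ξ
  have hFP : P ∘L (F ∘L P) = 0 := by
    rw [← ContinuousLinearMap.comp_assoc, hPF, ContinuousLinearMap.zero_comp]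
  have hPbP_eq : P ∘L ((b - F) ∘L P) = P ∘L (b ∘L P) := by
    show P * ((b - F) * P) = P * (b * P)
    have h0 : P * (F * P) = 0 := hFP
    have expand : P * ((b - F) * P) = P * (b * P) - P * (F * P) := by noncomm_ring
    rw [expand, h0, sub_zero]
  have hnorm2 : ‖P ∘L b ∘L P‖ ≤ ‖b - F‖ := by
    rw [← hPbP_eq]
    have hA : ‖P ∘L ((b - F) ∘L P)‖ ≤ ‖P‖ * ‖(b - F) ∘L P‖ := ContinuousLinearMap.opNorm_comp_le _ _
    have hB : ‖(b - F) ∘L P‖ ≤ ‖b - F‖ * ‖P‖ := ContinuousLinearMap.opNorm_comp_le _ _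
    have h1 : ‖b - F‖ * ‖P‖ ≤ ‖b - F‖ := by nlinarith [norm_nonneg (b - F)]
    have h2 : ‖P‖ * ‖(b - F) ∘L P‖ ≤ 1 * ‖b - F‖ :=
      mul_le_mul hPopnorm (hB.trans h1) (norm_nonneg _) zero_le_one
    linarith
  -- rank of G := a - PaP
  set G : H →L[ℂ] H := a - P ∘L a ∘L P with hG
  have hGmul : G = Q ∘L a + P ∘L (a ∘L Q) := by
    have e1 : P ∘L (a ∘L P) = (P * a) * P := rfl
    have e2 : Q ∘L a = Q * a := rfl
    have e3 : P ∘L (a ∘L Q) = (P * a) * Q := rfl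
    rw [hG, e1, e2, e3, hP]
    noncomm_ring
  have hGapp : ∀ ξ, G ξ = Q (a ξ) + P (a (Q ξ)) := by
    intro ξ
    rw [hGmul]
    rfl
  set V2 : Submodule ℂ H := Submodule.map (P : H →ₗ[ℂ] H) (Submodule.map (a : H →ₗ[ℂ] H) V)
    with hV2
  haveI : FiniteDimensional ℂ V2 := by
    haveI : FiniteDimensional ℂ (Submodule.map (a : H →ₗ[ℂ] H) V) := Module.Finite.map _ _
    exact Module.Finite.map _ _
  have hrange : LinearMap.range (G : H →ₗ[ℂ] H) ≤ V ⊔ V2 := by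
    rintro ζ hζ
    obtain ⟨ξ, rfl⟩ := LinearMap.mem_range.mp hζ
    rw [show (G : H →ₗ[ℂ] H) ξ = G ξ from rfl, hGapp ξ]
    apply Submodule.add_mem_sup
    · have : Q (a ξ) ∈ V := by
        simp only [hQ, ContinuousLinearMap.comp_apply, Submodule.subtypeL_apply]
        exact Submodule.coe_mem _
      exact this
    · have hmem : Q ξ ∈ V := by
        simp only [hQ, ContinuousLinearMap.comp_apply, Submodule.subtypeL_apply]
        exact Submodule.coe_mem _
      exact ⟨a (Q ξ), ⟨Q ξ, hmem, rfl⟩, rfl⟩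
  have hFD : FiniteDimensional ℂ (LinearMap.range (G : H →ₗ[ℂ] H)) :=
    Submodule.finiteDimensional_of_le hrange
  have hrank : Module.finrank ℂ (LinearMap.range (G : H →ₗ[ℂ] H)) ≤ n + n := by
    have h2 : Module.finrank ℂ V2 ≤ n := by
      calc Module.finrank ℂ V2 ≤ Module.finrank ℂ (Submodule.map (a : H →ₗ[ℂ] H) V) :=
            Submodule.finrank_map_le _ _
        _ ≤ Module.finrank ℂ V := Submodule.finrank_map_le _ _
        _ ≤ n := hF2
    calc Module.finrank ℂ (LinearMap.range (G : H →ₗ[ℂ] H)) ≤ Module.finrank ℂ (V ⊔ V2 : Submodule ℂ H) :=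
          Submodule.finrank_mono hrange
      _ ≤ Module.finrank ℂ V + Module.finrank ℂ V2 :=
          Submodule.finrank_add_le_finrank_add_finrank _ _
      _ ≤ n + n := Nat.add_le_add hF2 h2
  have haG : a - G = P ∘L a ∘L P := by rw [hG]; abel
  calc singVal a (n + n) ≤ ‖a - G‖ := singVal_le_of_rank_le _ _ _ hFD hrank
    _ = ‖P ∘L a ∘L P‖ := by rw [haG]
    _ ≤ ‖P ∘L b ∘L P‖ := hnorm1
    _ ≤ ‖b - F‖ := hnorm2

end OperatorOrder
section CELemmas

variable {H : Type*} [NormedAddCommGroup H] [InnerProductSpace ℂ H] [CompleteSpace H]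

lemma CEnorm_nonneg (S : BanachSymmSeqSpace) {w : H →L[ℂ] H} (hw : w ∈ CE (H := H) S) :
    0 ≤ CEnorm S w :=
  nrm_nonneg_of_mem S hw.2

/-- domination by `x₀` gives membership in `C_E` with norm bound. -/
lemma CE_of_dominated (S : BanachSymmSeqSpace) {w v : H →L[ℂ] H}
    (hv : v ∈ CE (H := H) S) (hw : IsCompactOperator (⇑w)) {C : ℝ} (hC : 0 ≤ C)
    (h : ∀ n, singVal w n ≤ C * singVal v (n / 4)) :
    w ∈ CE (H := H) S ∧ CEnorm S w ≤ 4 * C * CEnorm S v := by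
  have hmono : ∀ i j, i ≤ j → singVal v j ≤ singVal v i := fun i j hij => singVal_antitone v hij
  have hpos : ∀ n, 0 ≤ singVal v n := singVal_nonneg v
  have hdom : ∀ n, |singVal w n| ≤ C * singVal v (n / 4) := by
    intro n
    rw [abs_of_nonneg (singVal_nonneg w n)]
    exact h n
  have := mem_of_dominated S hv.2 hmono hpos hC hdom
  exact ⟨⟨hw, this.1⟩, this.2⟩

/-- a positive operator dominated by `v ∈ C_E` in the operator order lies in `C_E`. -/
lemma CE_of_pos_le (S : BanachSymmSeqSpace) {w v : H →L[ℂ] H}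
    (hv : v ∈ CE (H := H) S) (hw : IsCompactOperator (⇑w))
    (hwpos : w.IsPositive) (hle : (v - w).IsPositive) :
    w ∈ CE (H := H) S ∧ CEnorm S w ≤ 4 * CEnorm S v := by
  have h : ∀ n, singVal w n ≤ 1 * singVal v (n / 4) := by
    intro n
    rw [one_mul]
    have h1 : n / 4 + n / 4 ≤ n := by omega
    calc singVal w n ≤ singVal w (n / 4 + n / 4) := singVal_antitone w h1
      _ ≤ singVal v (n / 4) := singVal_two_mul_le hwpos hle (n / 4)
  have := CE_of_dominated S hv hw zero_le_one h
  simpa using this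

/-- sums of positive operators are positive -/
lemma isPositive_finset_sum {ι : Type*} (A : Finset ι) (g : ι → H →L[ℂ] H)
    (h : ∀ i ∈ A, (g i).IsPositive) : (∑ i ∈ A, g i).IsPositive := by
  classical
  induction A using Finset.induction_on with
  | empty => simpa using ContinuousLinearMap.isPositive_zero
  | @insert a A' hnot ih =>
    rw [Finset.sum_insert hnot]
    exact (h a (Finset.mem_insert_self a A')).add
      (ih fun i hi => h i (Finset.mem_insert_of_mem hi))

end CELemmas
section CombLemmas

variable {H : Type*} [NormedAddCommGroup H] [InnerProductSpace ℂ H] [CompleteSpace H]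

lemma isPositive_x_sub {x : ℕ → H →L[ℂ] H} (hdec : ∀ n, (x n - x (n + 1)).IsPositive)
    {i j : ℕ} (hij : i ≤ j) : (x i - x j).IsPositive := by
  induction j, hij using Nat.le_induction with
  | base => simpa using ContinuousLinearMap.isPositive_zero
  | succ j hij ih =>
    have := ih.add (hdec j)
    have heq : x i - x j + (x j - x (j+1)) = x i - x (j+1) := by abel
    rwa [heq] at this

lemma isCompactOperator_finset_sum {ι : Type*} (A : Finset ι) (g : ι → H →L[ℂ] H)
    (h : ∀ i ∈ A, IsCompactOperator (⇑(g i))) : IsCompactOperator (⇑(∑ i ∈ A, g i)) := by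
  classical
  induction A using Finset.induction_on with
  | empty => simpa using isCompactOperator_zero
  | @insert a A' hnot ih =>
    rw [Finset.sum_insert hnot]
    have h1 := h a (Finset.mem_insert_self a A')
    have h2 := ih fun i hi => h i (Finset.mem_insert_of_mem hi)
    have := h1.add h2
    have hcoe : ⇑(g a + ∑ i ∈ A', g i) = ⇑(g a) + ⇑(∑ i ∈ A', g i) := by
      funext ξ; simp
    rwa [hcoe]

lemma isCompactOperator_smul_clm (c : ℂ) {T : H →L[ℂ] H} (hT : IsCompactOperator (⇑T)) :
    IsCompactOperator (⇑(c • T)) := by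
  have := hT.smul c
  have hcoe : ⇑(c • T) = c • (⇑T) := by funext ξ; simp
  rwa [hcoe]

lemma isSelfAdjoint_real_smul {c : ℝ} {T : H →L[ℂ] H} (hT : IsSelfAdjoint T) :
    IsSelfAdjoint ((c : ℂ) • T) := by
  rw [IsSelfAdjoint, star_smul, hT.star_eq]
  simp [Complex.star_def, Complex.conj_ofReal]

/-- scaled basis operators belong to `C_E`. -/
lemma smul_x_mem_CEh (S : BanachSymmSeqSpace) {x : ℕ → H →L[ℂ] H}
    (hmem : ∀ n, x n ∈ CE (H := H) S) (hpos : ∀ n, (x n).IsPositive)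
    (hdec : ∀ n, (x n - x (n + 1)).IsPositive) (c : ℝ) (j : ℕ) :
    ((c : ℂ) • x j) ∈ CE (H := H) S ∧ IsSelfAdjoint ((c : ℂ) • x j) := by
  have hcomp : IsCompactOperator (⇑((c:ℂ) • x j)) := isCompactOperator_smul_clm _ (hmem j).1
  have hxj : ∀ n, singVal (x j) n ≤ singVal (x 0) (n / 4) := by
    intro n
    have h1 : n / 4 + n / 4 ≤ n := by omega
    calc singVal (x j) n ≤ singVal (x j) (n / 4 + n / 4) := singVal_antitone _ h1
      _ ≤ singVal (x 0) (n / 4) :=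
          singVal_two_mul_le (hpos j) (isPositive_x_sub hdec (Nat.zero_le j)) _
  have hsv : ∀ n, singVal ((c:ℂ) • x j) n ≤ |c| * singVal (x 0) (n / 4) := by
    intro n
    have hkey : singVal ((c:ℂ) • x j) n ≤ |c| * singVal (x j) n := by
      rcases le_or_gt 0 c with hc | hc
      · rw [abs_of_nonneg hc]; exact singVal_real_smul_le c (x j) n hc
      · have heq : (c:ℂ) • x j = -(((-c : ℝ):ℂ) • x j) := by
          push_cast; rw [neg_smul, neg_neg]
        rw [heq, singVal_neg, abs_of_neg hc]
        exact singVal_real_smul_le (-c) (x j) n (by linarith)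
    calc singVal ((c:ℂ) • x j) n ≤ |c| * singVal (x j) n := hkey
      _ ≤ |c| * singVal (x 0) (n / 4) :=
          mul_le_mul_of_nonneg_left (hxj n) (abs_nonneg c)
  exact ⟨(CE_of_dominated S (hmem 0) hcomp (abs_nonneg c) hsv).1,
    isSelfAdjoint_real_smul (hpos j).isSelfAdjoint⟩

/-- Master lemma: finite real combinations of the `x i` lie in `C_E`, with norm control. -/
lemma comb_mem_CE (S : BanachSymmSeqSpace) {x : ℕ → H →L[ℂ] H}
    (hmem : ∀ n, x n ∈ CE (H := H) S) (hpos : ∀ n, (x n).IsPositive)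
    (hdec : ∀ n, (x n - x (n + 1)).IsPositive) (d : ℕ → ℝ) (m : ℕ) :
    (∑ i ∈ Finset.range m, ((d i : ℂ)) • x i) ∈ CE (H := H) S ∧
    IsSelfAdjoint (∑ i ∈ Finset.range m, ((d i : ℂ)) • x i) ∧
    CEnorm S (∑ i ∈ Finset.range m, ((d i : ℂ)) • x i) ≤
      8 * (∑ i ∈ Finset.range m, |d i|) * CEnorm S (x 0) := by
  set D : ℝ := ∑ i ∈ Finset.range m, |d i| with hD
  have hD0 : 0 ≤ D := Finset.sum_nonneg fun i _ => abs_nonneg _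
  set dp : ℕ → ℝ := fun i => max (d i) 0 with hdp
  set dm : ℕ → ℝ := fun i => max (-(d i)) 0 with hdm
  have hdp0 : ∀ i, 0 ≤ dp i := fun i => le_max_right _ _
  have hdm0 : ∀ i, 0 ≤ dm i := fun i => le_max_right _ _
  have hdpm : ∀ i, d i = dp i - dm i := by
    intro i
    rcases le_or_gt 0 (d i) with h | h
    · simp [hdp, hdm, max_eq_left h, max_eq_right (neg_nonpos_of_nonneg h)]
    · simp [hdp, hdm, max_eq_right (le_of_lt h), max_eq_left (le_of_lt (neg_pos_of_neg h))]
  have hdple : ∀ i, dp i ≤ |d i| := fun i => max_le (le_abs_self _) (abs_nonneg _)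
  have hdmle : ∀ i, dm i ≤ |d i| := fun i => max_le (neg_le_abs _) (abs_nonneg _)
  set u : H →L[ℂ] H := ∑ i ∈ Finset.range m, ((dp i : ℂ)) • x i with hu
  set v : H →L[ℂ] H := ∑ i ∈ Finset.range m, ((dm i : ℂ)) • x i with hv
  set w : H →L[ℂ] H := ∑ i ∈ Finset.range m, ((d i : ℂ)) • x i with hw
  have hw_eq : w = u - v := by
    rw [hw, hu, hv, ← Finset.sum_sub_distrib]
    apply Finset.sum_congr rfl
    intro i _
    rw [← sub_smul]
    congr 1
    rw [hdpm i]
    push_cast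
    ring
  -- compactness
  have hcomp : ∀ (e : ℕ → ℝ), IsCompactOperator (⇑(∑ i ∈ Finset.range m, ((e i : ℂ)) • x i)) :=
    fun e => isCompactOperator_finset_sum _ _
      (fun i _ => isCompactOperator_smul_clm _ (hmem i).1)
  -- positivity of u, v and the dominations
  have hbound : ∀ (e : ℕ → ℝ), (∀ i, 0 ≤ e i) → (∀ i, e i ≤ |d i|) →
      ∀ k, singVal (∑ i ∈ Finset.range m, ((e i : ℂ)) • x i) k ≤ D * singVal (x 0) (k / 2) := by
    intro e he0 hele k
    set z : H →L[ℂ] H := ∑ i ∈ Finset.range m, ((e i : ℂ)) • x i with hz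
    have hzpos : z.IsPositive :=
      isPositive_finset_sum _ _ fun i _ => isPositive_real_smul (he0 i) (hpos i)
    have hse : (∑ i ∈ Finset.range m, e i) ≤ D := Finset.sum_le_sum fun i _ => hele i
    have hDz : ((D:ℂ) • x 0 - z).IsPositive := by
      have hcast : ((∑ i ∈ Finset.range m, e i : ℝ) : ℂ) • x 0 =
          ∑ i ∈ Finset.range m, ((e i : ℂ)) • x 0 := by
        push_cast
        rw [Finset.sum_smul]
      have hkey : (D:ℂ) • x 0 - z =
          (∑ i ∈ Finset.range m, ((e i : ℂ)) • (x 0 - x i)) +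
          (((D - ∑ i ∈ Finset.range m, e i : ℝ) : ℂ)) • x 0 := by
        have h1 : ∑ i ∈ Finset.range m, ((e i : ℂ)) • (x 0 - x i) =
            (∑ i ∈ Finset.range m, ((e i : ℂ)) • x 0) - z := by
          rw [hz, ← Finset.sum_sub_distrib]
          apply Finset.sum_congr rfl
          intro i _
          rw [smul_sub]
        have h2 : (((D - ∑ i ∈ Finset.range m, e i : ℝ) : ℂ)) • x 0 =
            (D:ℂ) • x 0 - ((∑ i ∈ Finset.range m, e i : ℝ) : ℂ) • x 0 := by
          push_cast
          rw [sub_smul]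
        rw [h1, h2, hcast]
        abel
      rw [hkey]
      apply ContinuousLinearMap.IsPositive.add
      · exact isPositive_finset_sum _ _ fun i _ =>
          isPositive_real_smul (he0 i) (isPositive_x_sub hdec (Nat.zero_le i))
      · exact isPositive_real_smul (by linarith) (hpos 0)
    have h1 : k / 2 + k / 2 ≤ k := by omega
    calc singVal z k ≤ singVal z (k / 2 + k / 2) := singVal_antitone _ h1
      _ ≤ singVal ((D:ℂ) • x 0) (k / 2) := singVal_two_mul_le hzpos hDz _
      _ ≤ D * singVal (x 0) (k / 2) := singVal_real_smul_le D (x 0) _ hD0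
  have hu_bound := hbound dp hdp0 hdple
  have hv_bound := hbound dm hdm0 hdmle
  have hw_bound : ∀ n, singVal w n ≤ (2 * D) * singVal (x 0) (n / 4) := by
    intro n
    have h1 : n / 2 + n / 2 ≤ n := by omega
    have h2 : singVal w (n / 2 + n / 2) ≤ singVal u (n / 2) + singVal (-v) (n / 2) := by
      have : w = u + (-v) := by rw [hw_eq]; abel
      rw [this]
      exact singVal_add_le u (-v) _ _
    rw [singVal_neg] at h2
    have h3 : n / 2 / 2 = n / 4 := by omega
    have h4 := hu_bound (n / 2)
    have h5 := hv_bound (n / 2)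
    rw [h3] at h4 h5
    calc singVal w n ≤ singVal w (n / 2 + n / 2) := singVal_antitone _ h1
      _ ≤ singVal u (n / 2) + singVal v (n / 2) := h2
      _ ≤ 2 * D * singVal (x 0) (n / 4) := by linarith
  have hmain := CE_of_dominated S (hmem 0) (hcomp d) (by linarith) hw_bound
  refine ⟨hmain.1, ?_, by calc CEnorm S w ≤ 4 * (2 * D) * CEnorm S (x 0) := hmain.2
    _ = 8 * D * CEnorm S (x 0) := by ring⟩
  -- self-adjointness
  rw [IsSelfAdjoint, hw, star_sum]
  apply Finset.sum_congr rfl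
  intro i _
  rw [star_smul, (hpos i).isSelfAdjoint.star_eq]
  simp [Complex.star_def, Complex.conj_ofReal]

end CombLemmas
section FLemmas

variable {H : Type*} [NormedAddCommGroup H] [InnerProductSpace ℂ H] [CompleteSpace H]

lemma singVal_zero_op (n : ℕ) : singVal (0 : H →L[ℂ] H) n = 0 := by
  refine le_antisymm ?_ (singVal_nonneg _ n)
  have := singVal_le_norm (0 : H →L[ℂ] H) n
  simpa using this

lemma zero_mem_CEh (S : BanachSymmSeqSpace) : (0 : H →L[ℂ] H) ∈ CEh (H := H) S := by
  refine ⟨⟨isCompactOperator_zero, ?_⟩, ContinuousLinearMap.isPositive_zero.isSelfAdjoint⟩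
  have : (fun n => singVal (0 : H →L[ℂ] H) n) = (0 : ℕ → ℝ) := by
    funext n; exact singVal_zero_op n
  rw [this]
  exact S.zero_mem

lemma f_zero (S : BanachSymmSeqSpace) {f : (H →L[ℂ] H) → ℝ}
    (hf : RealFunctionalOn S f) : f 0 = 0 := by
  have h := hf.1 0 (zero_mem_CEh S) 0 (zero_mem_CEh S)
  simp only [add_zero] at h
  linarith

/-- expansion of `f` over a finite combination. -/
lemma f_sum (S : BanachSymmSeqSpace) {x : ℕ → H →L[ℂ] H}
    (hmem : ∀ n, x n ∈ CE (H := H) S) (hpos : ∀ n, (x n).IsPositive)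
    (hdec : ∀ n, (x n - x (n + 1)).IsPositive) {f : (H →L[ℂ] H) → ℝ}
    (hf : RealFunctionalOn S f) (d : ℕ → ℝ) (k : ℕ) :
    f (∑ i ∈ Finset.range k, ((d i : ℂ)) • x i) = ∑ i ∈ Finset.range k, d i * f (x i) := by
  induction k with
  | zero => simpa using f_zero S hf
  | succ k ih =>
    rw [Finset.sum_range_succ, Finset.sum_range_succ]
    have hW := comb_mem_CE S hmem hpos hdec d k
    have hterm := smul_x_mem_CEh S hmem hpos hdec (d k) k
    rw [hf.1 _ ⟨hW.1, hW.2.1⟩ _ ⟨hterm.1, hterm.2⟩, ih,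
      hf.2.1 (d k) (x k) ⟨hmem k, (hpos k).isSelfAdjoint⟩]

/-- **Crux**: `f (x n)` is a Cauchy sequence for every bounded functional `f`. -/
lemma cauchy_f_x (S : BanachSymmSeqSpace) {x : ℕ → H →L[ℂ] H}
    (hmem : ∀ n, x n ∈ CE (H := H) S) (hpos : ∀ n, (x n).IsPositive)
    (hdec : ∀ n, (x n - x (n + 1)).IsPositive) {f : (H →L[ℂ] H) → ℝ}
    (hf : RealFunctionalOn S f) : CauchySeq (fun n => f (x n)) := by
  obtain ⟨M0, hM0⟩ := hf.2.2
  set M : ℝ := max M0 0 with hM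
  have hM' : ∀ a ∈ CEh (H := H) S, |f a| ≤ M * CEnorm S a := by
    intro a ha
    refine (hM0 a ha).trans (mul_le_mul_of_nonneg_right (le_max_left _ _) ?_)
    exact CEnorm_nonneg S ha.1
  set B : ℝ := M * (4 * CEnorm S (x 0)) with hB
  by_contra hcon
  rw [Metric.cauchySeq_iff] at hcon
  push_neg at hcon
  obtain ⟨ε, hε, hcon⟩ := hcon
  choose m' hm' n' hn' hd' using hcon
  set g : ℕ → ℕ × ℕ := fun k => Nat.rec (m' 0, n' 0)
    (fun _ pr => (m' (max pr.1 pr.2 + 1), n' (max pr.1 pr.2 + 1))) k with hg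
  set p : ℕ → ℕ := fun k => min (g k).1 (g k).2 with hp
  set q : ℕ → ℕ := fun k => max (g k).1 (g k).2 with hq
  set a : ℕ → ℝ := fun j => f (x j) with ha
  have hdist : ∀ k, ε ≤ dist (a (g k).1) (a (g k).2) := by
    intro k
    cases k with
    | zero => exact hd' 0
    | succ k => exact hd' (max (g k).1 (g k).2 + 1)
  have hb : ∀ k, ε ≤ |a (p k) - a (q k)| := by
    intro k
    have h0 := hdist k
    rw [Real.dist_eq] at h0
    have hpk : p k = min (g k).1 (g k).2 := rfl
    have hqk : q k = max (g k).1 (g k).2 := rfl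
    rcases le_total (g k).1 (g k).2 with h | h
    · rw [hpk, hqk, min_eq_left h, max_eq_right h]
      exact h0
    · rw [hpk, hqk, min_eq_right h, max_eq_left h, abs_sub_comm]
      exact h0
  have hpq : ∀ k, p k ≤ q k := fun k => min_le_max
  have hqp : ∀ k, q k + 1 ≤ p (k + 1) := by
    intro k
    have h2 := hm' (max (g k).1 (g k).2 + 1)
    have h3 := hn' (max (g k).1 (g k).2 + 1)
    have hpk : p (k+1) = min (m' (max (g k).1 (g k).2 + 1)) (n' (max (g k).1 (g k).2 + 1)) := rfl
    have hqk : q k = max (g k).1 (g k).2 := rfl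
    omega
  set z : ℕ → H →L[ℂ] H := fun k => x (p k) - x (q k) with hz
  have hzpos : ∀ k, (z k).IsPositive := fun k => isPositive_x_sub hdec (hpq k)
  have hzcomp : ∀ k, IsCompactOperator (⇑(z k)) := by
    intro k
    have := ((hmem (p k)).1).sub ((hmem (q k)).1)
    have hcoe : ⇑(z k) = ⇑(x (p k)) - ⇑(x (q k)) := by funext ξ; simp [hz]
    rwa [hcoe]
  -- the nesting claim
  have claim : ∀ n : ℕ, ∀ A : Finset ℕ, A ⊆ Finset.range n →
      ((x (p 0) - x (p n)) - ∑ k ∈ A, z k).IsPositive := by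
    intro n
    induction n with
    | zero =>
      intro A hA
      have hA0 : A = ∅ := Finset.subset_empty.mp (by rwa [Finset.range_zero] at hA)
      rw [hA0]
      simpa using ContinuousLinearMap.isPositive_zero
    | succ n ih =>
      intro A hA
      by_cases hn : n ∈ A
      · have hA' : A.erase n ⊆ Finset.range n := by
          intro k hk
          have h1 := hA (Finset.mem_of_mem_erase hk)
          have h2 := Finset.ne_of_mem_erase hk
          rw [Finset.mem_range] at *
          omega
        have hsum : ∑ k ∈ A, z k = z n + ∑ k ∈ A.erase n, z k :=
          (Finset.add_sum_erase A z hn).symm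
        have hIH := ih (A.erase n) hA'
        have hnext : (x (q n) - x (p (n+1))).IsPositive :=
          isPositive_x_sub hdec (by have := hqp n; omega)
        have heq : (x (p 0) - x (p (n+1))) - ∑ k ∈ A, z k =
            ((x (p 0) - x (p n)) - ∑ k ∈ A.erase n, z k) + (x (q n) - x (p (n+1))) := by
          rw [hsum, hz]
          simp only
          abel
        rw [heq]
        exact hIH.add hnext
      · have hA' : A ⊆ Finset.range n := by
          intro k hk
          have h1 := hA hk
          rw [Finset.mem_range] at *
          have : k ≠ n := fun h => hn (h ▸ hk)
          omega
        have hIH := ih A hA'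
        have hnext : (x (p n) - x (p (n+1))).IsPositive :=
          isPositive_x_sub hdec (by have := hqp n; have := hpq n; omega)
        have heq : (x (p 0) - x (p (n+1))) - ∑ k ∈ A, z k =
            ((x (p 0) - x (p n)) - ∑ k ∈ A, z k) + (x (p n) - x (p (n+1))) := by abel
        rw [heq]
        exact hIH.add hnext
  -- membership of partial sums in CEh with uniform norm bound
  have hwmem : ∀ n : ℕ, ∀ A : Finset ℕ, A ⊆ Finset.range n →
      (∑ k ∈ A, z k) ∈ CEh (H := H) S ∧ CEnorm S (∑ k ∈ A, z k) ≤ 4 * CEnorm S (x 0) := by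
    intro n A hA
    have hwpos : (∑ k ∈ A, z k).IsPositive :=
      isPositive_finset_sum _ _ fun k _ => hzpos k
    have hwcomp : IsCompactOperator (⇑(∑ k ∈ A, z k)) :=
      isCompactOperator_finset_sum _ _ fun k _ => hzcomp k
    have hwle : (x 0 - ∑ k ∈ A, z k).IsPositive := by
      have h1 : (x 0 - x (p 0)).IsPositive := isPositive_x_sub hdec (Nat.zero_le _)
      have h2 := claim n A hA
      have h3 : (x (p n)).IsPositive := hpos (p n)
      have heq : x 0 - ∑ k ∈ A, z k =
          ((x 0 - x (p 0)) + ((x (p 0) - x (p n)) - ∑ k ∈ A, z k)) + x (p n) := by abel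
      rw [heq]
      exact (h1.add h2).add h3
    have := CE_of_pos_le S (hmem 0) hwcomp hwpos hwle
    exact ⟨⟨this.1, hwpos.isSelfAdjoint⟩, this.2⟩
  -- f is additive over these sums
  have hfz : ∀ k, f (z k) = a (p k) - a (q k) := by
    intro k
    have hzCEh : z k ∈ CEh (H := H) S := by
      have := hwmem (k+1) {k} (by simp [Finset.singleton_subset_iff])
      simpa using this.1
    have hxq : x (q k) ∈ CEh (H := H) S := ⟨hmem (q k), (hpos (q k)).isSelfAdjoint⟩
    have heq : z k + x (q k) = x (p k) := by
      show x (p k) - x (q k) + x (q k) = x (p k)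
      abel
    have := hf.1 (z k) hzCEh (x (q k)) hxq
    rw [heq] at this
    show f (z k) = f (x (p k)) - f (x (q k))
    linarith
  have hfsum : ∀ n : ℕ, ∀ A : Finset ℕ, A ⊆ Finset.range n →
      f (∑ k ∈ A, z k) = ∑ k ∈ A, (a (p k) - a (q k)) := by
    intro n A
    classical
    induction A using Finset.induction_on with
    | empty => intro _; simpa using f_zero S hf
    | @insert c A' hnot ih =>
      intro hsub
      have hc : c ∈ Finset.range n := hsub (Finset.mem_insert_self c A')
      have hA' : A' ⊆ Finset.range n := fun k hk => hsub (Finset.mem_insert_of_mem hk)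
      rw [Finset.sum_insert hnot, Finset.sum_insert hnot]
      have hzCEh : z c ∈ CEh (H := H) S := by
        have := hwmem (c+1) {c} (by simp [Finset.singleton_subset_iff])
        simpa using this.1
      have hACEh : (∑ k ∈ A', z k) ∈ CEh (H := H) S := (hwmem n A' hA').1
      rw [hf.1 (z c) hzCEh _ hACEh, hfz c, ih hA']
  -- the contradiction
  have hbound : ∀ n : ℕ, ∀ A : Finset ℕ, A ⊆ Finset.range n →
      |∑ k ∈ A, (a (p k) - a (q k))| ≤ B := by
    intro n A hA
    rw [← hfsum n A hA]
    calc |f (∑ k ∈ A, z k)| ≤ M * CEnorm S (∑ k ∈ A, z k) := hM' _ (hwmem n A hA).1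
      _ ≤ M * (4 * CEnorm S (x 0)) := by
          apply mul_le_mul_of_nonneg_left (hwmem n A hA).2 (le_max_right M0 0)
      _ = B := rfl
  set K : ℕ := Nat.ceil ((2 * B + 1) / ε) with hK
  set Tp : Finset ℕ := (Finset.range K).filter (fun k => ε ≤ a (p k) - a (q k)) with hTp
  set Tm : Finset ℕ := (Finset.range K).filter (fun k => a (p k) - a (q k) ≤ -ε) with hTm
  have hcover : Finset.range K ⊆ Tp ∪ Tm := by
    intro k hk
    rcases abs_cases (a (p k) - a (q k)) with ⟨habs, _⟩ | ⟨habs, _⟩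
    · exact Finset.mem_union_left _ (Finset.mem_filter.mpr ⟨hk, by have := hb k; linarith⟩)
    · exact Finset.mem_union_right _ (Finset.mem_filter.mpr ⟨hk, by have := hb k; linarith⟩)
  have hcard : (K : ℝ) ≤ (Tp.card : ℝ) + (Tm.card : ℝ) := by
    have h1 : K ≤ Tp.card + Tm.card := by
      calc K = (Finset.range K).card := (Finset.card_range K).symm
        _ ≤ (Tp ∪ Tm).card := Finset.card_le_card hcover
        _ ≤ Tp.card + Tm.card := Finset.card_union_le _ _
    exact_mod_cast h1
  have hTpB : (Tp.card : ℝ) * ε ≤ B := by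
    have h1 : (Tp.card : ℝ) * ε ≤ ∑ k ∈ Tp, (a (p k) - a (q k)) := by
      have := Finset.card_nsmul_le_sum Tp (fun k => a (p k) - a (q k)) ε
        (fun k hk => (Finset.mem_filter.mp hk).2)
      simpa [nsmul_eq_mul] using this
    have h2 := hbound K Tp (Finset.filter_subset _ _)
    calc (Tp.card : ℝ) * ε ≤ ∑ k ∈ Tp, (a (p k) - a (q k)) := h1
      _ ≤ |∑ k ∈ Tp, (a (p k) - a (q k))| := le_abs_self _
      _ ≤ B := h2
  have hTmB : (Tm.card : ℝ) * ε ≤ B := by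
    have h1 : (Tm.card : ℝ) * ε ≤ ∑ k ∈ Tm, (a (q k) - a (p k)) := by
      have := Finset.card_nsmul_le_sum Tm (fun k => a (q k) - a (p k)) ε
        (fun k hk => by have h5 := (Finset.mem_filter.mp hk).2; show ε ≤ a (q k) - a (p k); linarith)
      simpa [nsmul_eq_mul] using this
    have h2 := hbound K Tm (Finset.filter_subset _ _)
    have h3 : ∑ k ∈ Tm, (a (q k) - a (p k)) = -∑ k ∈ Tm, (a (p k) - a (q k)) := by
      rw [← Finset.sum_neg_distrib]
      apply Finset.sum_congr rfl
      intro k _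
      ring
    calc (Tm.card : ℝ) * ε ≤ ∑ k ∈ Tm, (a (q k) - a (p k)) := h1
      _ = -∑ k ∈ Tm, (a (p k) - a (q k)) := h3
      _ ≤ |∑ k ∈ Tm, (a (p k) - a (q k))| := neg_le_abs _
      _ ≤ B := h2
  have hKbig : (2 * B + 1) ≤ (K : ℝ) * ε := by
    have h1 : (2 * B + 1) / ε ≤ (K : ℝ) := Nat.le_ceil _
    calc 2 * B + 1 = ((2 * B + 1) / ε) * ε := by field_simp
      _ ≤ (K : ℝ) * ε := mul_le_mul_of_nonneg_right h1 (le_of_lt hε)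
  have : (K : ℝ) * ε ≤ 2 * B := by
    have := add_le_add hTpB hTmB
    calc (K : ℝ) * ε ≤ ((Tp.card : ℝ) + (Tm.card : ℝ)) * ε :=
          mul_le_mul_of_nonneg_right hcard (le_of_lt hε)
      _ = (Tp.card : ℝ) * ε + (Tm.card : ℝ) * ε := by ring
      _ ≤ 2 * B := by linarith
  linarith

end FLemmas

/-- If `x_n ∈ C_E` are positive operators decreasing to `0` in the
operator order, then the absolutely convex hull of `{0, x_1, x_2, …}` in the real Banach
space `C_E^h` is a Rosenthal set: every sequence in it admits a weakly Cauchy subsequence. -/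
theorem absolutely_convex_hull_rosenthal
    {H : Type*} [NormedAddCommGroup H] [InnerProductSpace ℂ H] [CompleteSpace H]
    [TopologicalSpace.SeparableSpace H] (hinf : ¬ FiniteDimensional ℂ H)
    (S : BanachSymmSeqSpace) (hc0 : S.SubsetC0)
    (x : ℕ → H →L[ℂ] H) (hmem : ∀ n, x n ∈ CE (H := H) S)
    (hpos : ∀ n, (x n).IsPositive)
    (hdec : ∀ n, (x n - x (n + 1)).IsPositive)
    (hinf0 : ∀ z : H →L[ℂ] H, (∀ n, (x n - z).IsPositive) → (-z).IsPositive) :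
    ∀ y : ℕ → H →L[ℂ] H,
      (∀ n, ∃ (m : ℕ) (c : ℕ → ℝ), (∑ i ∈ Finset.range m, |c i|) ≤ 1 ∧
        y n = ∑ i ∈ Finset.range m, ((c i : ℂ)) • x i) →
      ∃ φ : ℕ → ℕ, StrictMono φ ∧
        ∀ f : (H →L[ℂ] H) → ℝ, RealFunctionalOn S f →
          ∃ L : ℝ, Filter.Tendsto (fun i => f (y (φ i))) Filter.atTop (nhds L) := by
  intro y hy
  choose m craw hsum1 hyrep using hy
  set c : ℕ → ℕ → ℝ := fun n i => if i < m n then craw n i else 0 with hc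
  have hczero : ∀ n i, m n ≤ i → c n i = 0 := by
    intro n i hi
    simp only [hc]
    rw [if_neg (by omega)]
  have hceq : ∀ n i, i < m n → c n i = craw n i := by
    intro n i hi
    simp only [hc]
    rw [if_pos hi]
  have hcsum : ∀ n k, (∑ i ∈ Finset.range k, |c n i|) ≤ 1 := by
    intro n k
    have hsub : ∑ i ∈ Finset.range k, |c n i| ≤ ∑ i ∈ Finset.range (max k (m n)), |c n i| :=
      Finset.sum_le_sum_of_subset_of_nonneg
        (Finset.range_subset_range.mpr (le_max_left _ _)) (fun i _ _ => abs_nonneg _)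
    have heq1 : ∑ i ∈ Finset.range (m n), |c n i| =
        ∑ i ∈ Finset.range (max k (m n)), |c n i| := by
      apply Finset.sum_subset (Finset.range_subset_range.mpr (le_max_right _ _))
      intro i _ hi
      rw [Finset.mem_range] at hi
      rw [hczero n i (by omega), abs_zero]
    have heq2 : ∑ i ∈ Finset.range (m n), |c n i| = ∑ i ∈ Finset.range (m n), |craw n i| := by
      apply Finset.sum_congr rfl
      intro i hi
      rw [Finset.mem_range] at hi
      rw [hceq n i hi]
    calc ∑ i ∈ Finset.range k, |c n i| ≤ ∑ i ∈ Finset.range (max k (m n)), |c n i| := hsub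
      _ = ∑ i ∈ Finset.range (m n), |craw n i| := by rw [← heq1, heq2]
      _ ≤ 1 := hsum1 n
  have hcabs : ∀ n i, |c n i| ≤ 1 := by
    intro n i
    calc |c n i| ≤ ∑ j ∈ Finset.range (i+1), |c n j| :=
          Finset.single_le_sum (fun j _ => abs_nonneg (c n j)) (Finset.self_mem_range_succ i)
      _ ≤ 1 := hcsum n (i+1)
  have hyc : ∀ n k, m n ≤ k → y n = ∑ i ∈ Finset.range k, ((c n i : ℂ)) • x i := by
    intro n k hk
    rw [hyrep n]
    have heq2 : ∑ i ∈ Finset.range (m n), ((craw n i : ℂ)) • x i =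
        ∑ i ∈ Finset.range (m n), ((c n i : ℂ)) • x i := by
      apply Finset.sum_congr rfl
      intro i hi
      rw [Finset.mem_range] at hi
      rw [hceq n i hi]
    rw [heq2]
    apply Finset.sum_subset (Finset.range_subset_range.mpr hk)
    intro i _ hi
    rw [Finset.mem_range] at hi
    rw [hczero n i (by omega)]
    simp
  -- compactness extraction: pointwise limit of coefficients
  have hccube : ∀ n, c n ∈ Set.pi Set.univ (fun _ : ℕ => Set.Icc (-1:ℝ) 1) := by
    intro n
    rw [Set.mem_univ_pi]
    intro i
    rw [Set.mem_Icc, ← abs_le]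
    exact hcabs n i
  have hcompact : IsCompact (Set.pi Set.univ (fun _ : ℕ => Set.Icc (-1:ℝ) 1)) :=
    isCompact_univ_pi (fun _ => isCompact_Icc)
  obtain ⟨cl, _, φ₁, hφ₁, hconv₁⟩ := hcompact.tendsto_subseq hccube
  -- second extraction: total sums
  set t : ℕ → ℝ := fun n => ∑ i ∈ Finset.range (m n), c n i with ht
  have htmem : ∀ i, t (φ₁ i) ∈ Set.Icc (-1:ℝ) 1 := by
    intro i
    rw [Set.mem_Icc, ← abs_le]
    calc |t (φ₁ i)| ≤ ∑ j ∈ Finset.range (m (φ₁ i)), |c (φ₁ i) j| :=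
          Finset.abs_sum_le_sum_abs _ _
      _ ≤ 1 := hcsum _ _
  obtain ⟨τ, _, φ₂, hφ₂, hconv₂⟩ := isCompact_Icc.tendsto_subseq htmem
  refine ⟨φ₁ ∘ φ₂, hφ₁.comp hφ₂, ?_⟩
  intro f hf
  -- the limit of f (x n)
  obtain ⟨L, hL⟩ := cauchySeq_tendsto_of_complete (cauchy_f_x S hmem hpos hdec hf)
  set eps : ℕ → ℝ := fun j => f (x j) - L with heps
  have heps0 : Filter.Tendsto eps Filter.atTop (nhds 0) := by
    have := hL.sub (tendsto_const_nhds (x := L))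
    simpa [heps, sub_self] using this
  -- representation of f (y n)
  have hsumc : ∀ n k, m n ≤ k → (∑ j ∈ Finset.range k, c n j) = t n := by
    intro n k hk
    rw [ht]
    refine (Finset.sum_subset (Finset.range_subset_range.mpr hk) ?_).symm
    intro i _ hi
    rw [Finset.mem_range] at hi
    exact hczero n i (by omega)
  have hrep : ∀ n k, m n ≤ k → f (y n) = L * t n + ∑ j ∈ Finset.range k, c n j * eps j := by
    intro n k hk
    rw [hyc n k hk, f_sum S hmem hpos hdec hf (c n) k]
    have h1 : ∑ j ∈ Finset.range k, c n j * f (x j)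
        = ∑ j ∈ Finset.range k, (L * c n j + c n j * eps j) := by
      apply Finset.sum_congr rfl
      intro j _
      simp only [heps]
      ring
    rw [h1, Finset.sum_add_distrib, ← Finset.mul_sum, hsumc n k hk]
  -- Cauchy property of f (y (φ i))
  apply cauchySeq_tendsto_of_complete
  rw [Metric.cauchySeq_iff]
  intro δ hδ
  have hLpos : (0:ℝ) < |L| + 1 := by positivity
  set δ1 : ℝ := δ / (8 * (|L| + 1)) with hδ1
  have hδ1pos : 0 < δ1 := by positivity
  have htconv : Filter.Tendsto (fun i => t (φ₁ (φ₂ i))) Filter.atTop (nhds τ) := hconv₂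
  rw [Metric.tendsto_atTop] at htconv
  obtain ⟨N₁, hN₁⟩ := htconv δ1 hδ1pos
  rw [Metric.tendsto_atTop] at heps0
  obtain ⟨J, hJ⟩ := heps0 (δ/8) (by positivity)
  have hJ' : ∀ j, J ≤ j → |eps j| ≤ δ/8 := by
    intro j hj
    have := hJ j hj
    rw [Real.dist_eq, sub_zero] at this
    exact le_of_lt this
  set R : ℝ := (∑ j ∈ Finset.range J, |eps j|) + 1 with hR
  have hsum_eps : 0 ≤ ∑ j ∈ Finset.range J, |eps j| :=
    Finset.sum_nonneg fun j _ => abs_nonneg _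
  have hRpos : 0 < R := by rw [hR]; linarith
  set δ2 : ℝ := δ / (8 * R) with hδ2
  have hδ2pos : 0 < δ2 := by positivity
  have hcoord : ∀ j, Filter.Tendsto (fun i => c (φ₁ (φ₂ i)) j) Filter.atTop (nhds (cl j)) := by
    intro j
    have h1 := tendsto_pi_nhds.mp hconv₁ j
    exact h1.comp hφ₂.tendsto_atTop
  have hcoordJ : ∀ᶠ i in Filter.atTop, ∀ j ∈ Finset.range J,
      |c (φ₁ (φ₂ i)) j - cl j| < δ2 := by
    rw [Finset.eventually_all]
    intro j _
    have h1 := hcoord j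
    rw [Metric.tendsto_atTop] at h1
    obtain ⟨N, hN⟩ := h1 δ2 hδ2pos
    filter_upwards [Filter.eventually_ge_atTop N] with i hi
    have := hN i hi
    rwa [Real.dist_eq] at this
  obtain ⟨N₂, hN₂⟩ := Filter.eventually_atTop.mp hcoordJ
  refine ⟨max N₁ N₂, ?_⟩
  intro i hi i' hi'
  have hiN₁ : N₁ ≤ i := le_trans (le_max_left _ _) hi
  have hiN₂ : N₂ ≤ i := le_trans (le_max_right _ _) hi
  have hi'N₁ : N₁ ≤ i' := le_trans (le_max_left _ _) hi'
  have hi'N₂ : N₂ ≤ i' := le_trans (le_max_right _ _) hi'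
  show dist (f (y ((φ₁ ∘ φ₂) i))) (f (y ((φ₁ ∘ φ₂) i'))) < δ
  set n₁ : ℕ := φ₁ (φ₂ i) with hn₁
  set n₂ : ℕ := φ₁ (φ₂ i') with hn₂
  set k : ℕ := max (max (m n₁) (m n₂)) J with hkdef
  have hk1 : m n₁ ≤ k := le_trans (le_max_left _ _) (le_max_left _ _)
  have hk2 : m n₂ ≤ k := le_trans (le_max_right _ _) (le_max_left _ _)
  have hk3 : J ≤ k := le_max_right _ _
  have e1 : f (y ((φ₁ ∘ φ₂) i)) = L * t n₁ + ∑ j ∈ Finset.range k, c n₁ j * eps j :=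
    hrep n₁ k hk1
  have e2 : f (y ((φ₁ ∘ φ₂) i')) = L * t n₂ + ∑ j ∈ Finset.range k, c n₂ j * eps j :=
    hrep n₂ k hk2
  rw [Real.dist_eq, e1, e2]
  -- three estimates
  have hest0 : |L * t n₁ - L * t n₂| ≤ δ/4 := by
    have h1 := hN₁ i hiN₁
    have h2 := hN₁ i' hi'N₁
    rw [Real.dist_eq] at h1 h2
    have h3 : |L * t n₁ - L * t n₂| = |L| * |t n₁ - t n₂| := by rw [← abs_mul]; ring_nf
    have h4 : |t n₁ - t n₂| ≤ |t n₁ - τ| + |τ - t n₂| := by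
      calc |t n₁ - t n₂| = |(t n₁ - τ) + (τ - t n₂)| := by ring_nf
        _ ≤ |t n₁ - τ| + |τ - t n₂| := abs_add_le _ _
    have h5 : |τ - t n₂| = |t n₂ - τ| := abs_sub_comm _ _
    have h6 : |L| * |t n₁ - t n₂| ≤ |L| * (2 * δ1) := by
      apply mul_le_mul_of_nonneg_left _ (abs_nonneg L)
      rw [h5] at h4
      have := h1
      have := h2
      -- h1 : |t n₁ - τ| < δ1, h2 : |t n₂ - τ| < δ1
      linarith
    rw [h3]
    calc |L| * |t n₁ - t n₂| ≤ |L| * (2 * δ1) := h6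
      _ ≤ (|L| + 1) * (2 * δ1) := by nlinarith [abs_nonneg L, hδ1pos]
      _ = δ/4 := by rw [hδ1]; field_simp; ring
  have hsplit : ∀ n' : ℕ, (∑ j ∈ Finset.range k, c n' j * eps j) =
      (∑ j ∈ Finset.range J, c n' j * eps j) + (∑ j ∈ Finset.Ico J k, c n' j * eps j) :=
    fun n' => (Finset.sum_range_add_sum_Ico _ hk3).symm
  have hIcoabs : ∀ n' : ℕ, (∑ j ∈ Finset.Ico J k, |c n' j|) ≤ 1 := by
    intro n'
    calc ∑ j ∈ Finset.Ico J k, |c n' j| ≤ ∑ j ∈ Finset.range k, |c n' j| :=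
        Finset.sum_le_sum_of_subset_of_nonneg
          (by intro j hj; rw [Finset.mem_Ico] at hj; rw [Finset.mem_range]; omega)
          (fun j _ _ => abs_nonneg _)
      _ ≤ 1 := hcsum n' k
  have htail : ∀ n' : ℕ, |∑ j ∈ Finset.Ico J k, c n' j * eps j| ≤ δ/8 := by
    intro n'
    calc |∑ j ∈ Finset.Ico J k, c n' j * eps j| ≤ ∑ j ∈ Finset.Ico J k, |c n' j * eps j| :=
          Finset.abs_sum_le_sum_abs _ _
      _ ≤ ∑ j ∈ Finset.Ico J k, |c n' j| * (δ/8) := by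
          apply Finset.sum_le_sum
          intro j hj
          rw [Finset.mem_Ico] at hj
          rw [abs_mul]
          exact mul_le_mul_of_nonneg_left (hJ' j hj.1) (abs_nonneg _)
      _ = (∑ j ∈ Finset.Ico J k, |c n' j|) * (δ/8) := by rw [← Finset.sum_mul]
      _ ≤ 1 * (δ/8) := by
          apply mul_le_mul_of_nonneg_right (hIcoabs n') (by positivity)
      _ = δ/8 := by ring
  have hhead : |∑ j ∈ Finset.range J, c n₁ j * eps j - ∑ j ∈ Finset.range J, c n₂ j * eps j|
      ≤ δ/4 := by
    have hdel : ∀ j ∈ Finset.range J, |c n₁ j - c n₂ j| ≤ 2 * δ2 := by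
      intro j hj
      have h1 := hN₂ i hiN₂ j hj
      have h2 := hN₂ i' hi'N₂ j hj
      calc |c n₁ j - c n₂ j| = |(c n₁ j - cl j) + (cl j - c n₂ j)| := by ring_nf
        _ ≤ |c n₁ j - cl j| + |cl j - c n₂ j| := abs_add_le _ _
        _ ≤ 2 * δ2 := by
            rw [abs_sub_comm (cl j) (c n₂ j)]
            linarith
    calc |∑ j ∈ Finset.range J, c n₁ j * eps j - ∑ j ∈ Finset.range J, c n₂ j * eps j|
        = |∑ j ∈ Finset.range J, (c n₁ j - c n₂ j) * eps j| := by
          rw [← Finset.sum_sub_distrib]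
          congr 1
          apply Finset.sum_congr rfl
          intro j _
          ring
      _ ≤ ∑ j ∈ Finset.range J, |(c n₁ j - c n₂ j) * eps j| := Finset.abs_sum_le_sum_abs _ _
      _ ≤ ∑ j ∈ Finset.range J, (2 * δ2) * |eps j| := by
          apply Finset.sum_le_sum
          intro j hj
          rw [abs_mul]
          exact mul_le_mul_of_nonneg_right (hdel j hj) (abs_nonneg _)
      _ = (2 * δ2) * ∑ j ∈ Finset.range J, |eps j| := by rw [← Finset.mul_sum]
      _ ≤ (2 * δ2) * R := by
          apply mul_le_mul_of_nonneg_left _ (by positivity)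
          rw [hR]; linarith
      _ = δ/4 := by rw [hδ2]; field_simp; ring
  -- combine
  have hfinal : |(L * t n₁ + ∑ j ∈ Finset.range k, c n₁ j * eps j) -
      (L * t n₂ + ∑ j ∈ Finset.range k, c n₂ j * eps j)| < δ := by
    rw [hsplit n₁, hsplit n₂]
    have habs : |(L * t n₁ + ((∑ j ∈ Finset.range J, c n₁ j * eps j) +
        (∑ j ∈ Finset.Ico J k, c n₁ j * eps j))) -
        (L * t n₂ + ((∑ j ∈ Finset.range J, c n₂ j * eps j) +
        (∑ j ∈ Finset.Ico J k, c n₂ j * eps j)))| ≤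
        |L * t n₁ - L * t n₂| +
        |∑ j ∈ Finset.range J, c n₁ j * eps j - ∑ j ∈ Finset.range J, c n₂ j * eps j| +
        (|∑ j ∈ Finset.Ico J k, c n₁ j * eps j| + |∑ j ∈ Finset.Ico J k, c n₂ j * eps j|) := by
      have step1 : ∀ A B C D E G : ℝ, |(A + (B + C)) - (D + (E + G))| ≤
          |A - D| + |B - E| + (|C| + |G|) := by
        intro A B C D E G
        calc |(A + (B + C)) - (D + (E + G))| = |(A - D) + ((B - E) + (C + -G))| := by ring_nf
          _ ≤ |A - D| + |(B - E) + (C + -G)| := abs_add_le _ _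
          _ ≤ |A - D| + (|B - E| + |C + -G|) := by
              have := abs_add_le (B - E) (C + -G)
              linarith
          _ ≤ |A - D| + (|B - E| + (|C| + |-G|)) := by
              have := abs_add_le C (-G)
              linarith
          _ = |A - D| + |B - E| + (|C| + |G|) := by rw [abs_neg]; ring
      exact step1 _ _ _ _ _ _
    have h1 := htail n₁
    have h2 := htail n₂
    calc |(L * t n₁ + ((∑ j ∈ Finset.range J, c n₁ j * eps j) +
        (∑ j ∈ Finset.Ico J k, c n₁ j * eps j))) -
        (L * t n₂ + ((∑ j ∈ Finset.range J, c n₂ j * eps j) +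
        (∑ j ∈ Finset.Ico J k, c n₂ j * eps j)))| ≤
        |L * t n₁ - L * t n₂| +
        |∑ j ∈ Finset.range J, c n₁ j * eps j - ∑ j ∈ Finset.range J, c n₂ j * eps j| +
        (|∑ j ∈ Finset.Ico J k, c n₁ j * eps j| + |∑ j ∈ Finset.Ico J k, c n₂ j * eps j|) :=
          habs
      _ ≤ δ/4 + δ/4 + (δ/8 + δ/8) := by
          have := hest0
          have := hhead
          linarith
      _ < δ := by linarith
  exact hfinal
end
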